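/- arXiv:1408.3040 — 9 statements merged into one kernel-verified Lean document; each statement's English description precedes it below -/
import Mathlib

section
/- Write f = log C. Then (1/4)·(f'''(0) + 2·f''''(0) + f'''''(0)) = g·(1 − 2α)(6α − 1) / (16α); equivalently, the operator (1/4)(1 + d/dT)² applied to f''' and evaluated at T = 0 equals g(1 − 2α)(6α − 1)/(16α). -/
open Real MeasureTheory Filter

/-- `Σ = √(3α²/2 − 1/8)`. -/
noncomputable def Sg (α : ℝ) : ℝ := Real.sqrt (3 * α ^ 2 / 2 - 1 / 8)

/-- `C(T) = Σ·cosh(ΣT) + α·sinh(ΣT)`. -/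
noncomputable def Cg (α : ℝ) (T : ℝ) : ℝ :=
  Sg α * Real.cosh (Sg α * T) + α * Real.sinh (Sg α * T)

/-- `C'(T)`. -/
noncomputable def Dg (α : ℝ) (x : ℝ) : ℝ :=
  Sg α * (Sg α * Real.sinh (Sg α * x) + α * Real.cosh (Sg α * x))

/-- `f' = C'/C`. -/
noncomputable def Hg (α : ℝ) (x : ℝ) : ℝ := Dg α x / Cg α x

/-- `f''`. -/
noncomputable def P1 (α : ℝ) (x : ℝ) : ℝ := Sg α ^ 2 - Hg α x ^ 2

/-- `f'''`. -/
noncomputable def P2 (α : ℝ) (x : ℝ) : ℝ := -2 * Hg α x * P1 α x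

/-- `f''''`. -/
noncomputable def P3 (α : ℝ) (x : ℝ) : ℝ := -2 * P1 α x ^ 2 - 2 * Hg α x * P2 α x

/-- `f'''''`. -/
noncomputable def P4 (α : ℝ) (x : ℝ) : ℝ :=
  -6 * P1 α x * P2 α x - 2 * Hg α x * P3 α x

lemma hasDerivAt_Cg (α x : ℝ) : HasDerivAt (Cg α) (Dg α x) x := by
  have hid : HasDerivAt (fun y : ℝ => Sg α * y) (Sg α) x := by
    simpa using (hasDerivAt_id x).const_mul (Sg α)
  have h := (hid.cosh.const_mul (Sg α)).add (hid.sinh.const_mul α)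
  refine HasDerivAt.congr_deriv h ?_
  simp only [Dg]
  ring

lemma hasDerivAt_Dg (α x : ℝ) : HasDerivAt (Dg α) (Sg α ^ 2 * Cg α x) x := by
  have hid : HasDerivAt (fun y : ℝ => Sg α * y) (Sg α) x := by
    simpa using (hasDerivAt_id x).const_mul (Sg α)
  have h := ((hid.sinh.const_mul (Sg α)).add (hid.cosh.const_mul α)).const_mul (Sg α)
  refine HasDerivAt.congr_deriv h ?_
  simp only [Cg]
  ring

lemma hasDerivAt_Hg (α x : ℝ) (hx : Cg α x ≠ 0) : HasDerivAt (Hg α) (P1 α x) x := by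
  have h := (hasDerivAt_Dg α x).div (hasDerivAt_Cg α x) hx
  refine HasDerivAt.congr_deriv h ?_
  simp only [P1, Hg]
  field_simp

lemma hasDerivAt_P1 (α x : ℝ) (hx : Cg α x ≠ 0) : HasDerivAt (P1 α) (P2 α x) x := by
  have h := (hasDerivAt_const x (Sg α ^ 2)).sub ((hasDerivAt_Hg α x hx).pow 2)
  refine HasDerivAt.congr_deriv h ?_
  simp only [P2, P1]
  ring

/-- `(1/4)(f'''(0) + 2f''''(0) + f'''''(0)) = g(1 − 2α)(6α − 1)/(16α)` for `f = log C`,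
`g = α/4 − α³`. -/
theorem stmt4 (α : ℝ) (h1 : 1 / (2 * Real.sqrt 3) < α) (h2 : α < 1 / 2) :
    (1 / 4) * (iteratedDeriv 3 (fun x => Real.log (Cg α x)) 0
        + 2 * iteratedDeriv 4 (fun x => Real.log (Cg α x)) 0
        + iteratedDeriv 5 (fun x => Real.log (Cg α x)) 0)
      = (α / 4 - α ^ 3) * (1 - 2 * α) * (6 * α - 1) / (16 * α) := by
  have hα0 : 0 < α := lt_trans (by positivity) h1
  have h12 : (1 : ℝ) / 12 < α ^ 2 := by
    have h3p : (0 : ℝ) < Real.sqrt 3 := by positivity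
    have h3 : Real.sqrt 3 ^ 2 = 3 := Real.sq_sqrt (by norm_num)
    have key : (1 : ℝ) < 2 * Real.sqrt 3 * α := by
      rw [div_lt_iff₀ (by positivity)] at h1
      linarith
    have key2 : (1 : ℝ) * 1 < (2 * Real.sqrt 3 * α) * (2 * Real.sqrt 3 * α) :=
      mul_lt_mul'' key key zero_le_one zero_le_one
    nlinarith [key2, h3]
  have hS2 : Sg α ^ 2 = 3 * α ^ 2 / 2 - 1 / 8 :=
    Real.sq_sqrt (by nlinarith)
  have hSpos : 0 < Sg α := Real.sqrt_pos.mpr (by nlinarith)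
  -- the open set where C > 0
  have hCcont : Continuous (Cg α) :=
    continuous_iff_continuousAt.mpr fun x => (hasDerivAt_Cg α x).continuousAt
  have hUopen : IsOpen {x : ℝ | 0 < Cg α x} := isOpen_lt continuous_const hCcont
  have hC0 : Cg α 0 = Sg α := by
    simp [Cg]
  have hU0 : (0 : ℝ) ∈ {x : ℝ | 0 < Cg α x} := by
    simp only [Set.mem_setOf_eq, hC0]; exact hSpos
  have hUnhd : {x : ℝ | 0 < Cg α x} ∈ nhds (0 : ℝ) := hUopen.mem_nhds hU0
  -- chain of eventual equalities of derivatives near 0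
  have E1 : deriv (fun x => Real.log (Cg α x)) =ᶠ[nhds (0:ℝ)] Hg α := by
    refine eventuallyEq_of_mem hUnhd fun x hx => ?_
    have hne : Cg α x ≠ 0 := ne_of_gt hx
    have := (hasDerivAt_Cg α x).log hne
    exact this.deriv
  have E2 : deriv (deriv (fun x => Real.log (Cg α x))) =ᶠ[nhds (0:ℝ)] P1 α := by
    refine E1.deriv.trans (eventuallyEq_of_mem hUnhd fun x hx => ?_)
    exact (hasDerivAt_Hg α x (ne_of_gt hx)).deriv
  have E3 : deriv (deriv (deriv (fun x => Real.log (Cg α x)))) =ᶠ[nhds (0:ℝ)] P2 α := by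
    refine E2.deriv.trans (eventuallyEq_of_mem hUnhd fun x hx => ?_)
    exact (hasDerivAt_P1 α x (ne_of_gt hx)).deriv
  have hP2d : ∀ x, Cg α x ≠ 0 → HasDerivAt (P2 α) (P3 α x) x := by
    intro x hx
    have heq : P2 α = fun y => (-2 : ℝ) * (Hg α y * P1 α y) := by
      funext y; simp only [P2]; ring
    rw [heq]
    have h := ((hasDerivAt_Hg α x hx).mul (hasDerivAt_P1 α x hx)).const_mul (-2 : ℝ)
    refine HasDerivAt.congr_deriv h ?_
    simp only [P3, P2]
    ring
  have hP3d : ∀ x, Cg α x ≠ 0 → HasDerivAt (P3 α) (P4 α x) x := by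
    intro x hx
    have heq : P3 α = fun y => (-2 : ℝ) * P1 α y ^ 2 - (2 : ℝ) * (Hg α y * P2 α y) := by
      funext y; simp only [P3]; ring
    rw [heq]
    have h := (((hasDerivAt_P1 α x hx).pow 2).const_mul (-2 : ℝ)).sub
      (((hasDerivAt_Hg α x hx).mul (hP2d x hx)).const_mul (2 : ℝ))
    refine HasDerivAt.congr_deriv h ?_
    simp only [P4, P3, P2]
    push_cast
    ring
  have E4 : deriv (deriv (deriv (deriv (fun x => Real.log (Cg α x))))) =ᶠ[nhds (0:ℝ)]
      P3 α := by
    refine E3.deriv.trans (eventuallyEq_of_mem hUnhd fun x hx => ?_)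
    exact (hP2d x (ne_of_gt hx)).deriv
  have E5 : deriv (deriv (deriv (deriv (deriv (fun x => Real.log (Cg α x)))))) =ᶠ[nhds (0:ℝ)]
      P4 α := by
    refine E4.deriv.trans (eventuallyEq_of_mem hUnhd fun x hx => ?_)
    exact (hP3d x (ne_of_gt hx)).deriv
  -- identify iterated derivatives
  have i3 : iteratedDeriv 3 (fun x => Real.log (Cg α x)) 0 = P2 α 0 := by
    rw [show (3:ℕ) = 2+1 from rfl, iteratedDeriv_succ,
      show (2:ℕ) = 1+1 from rfl, iteratedDeriv_succ,
      show (1:ℕ) = 0+1 from rfl, iteratedDeriv_succ, iteratedDeriv_zero]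
    exact E3.eq_of_nhds
  have i4 : iteratedDeriv 4 (fun x => Real.log (Cg α x)) 0 = P3 α 0 := by
    rw [show (4:ℕ) = 3+1 from rfl, iteratedDeriv_succ,
      show (3:ℕ) = 2+1 from rfl, iteratedDeriv_succ,
      show (2:ℕ) = 1+1 from rfl, iteratedDeriv_succ,
      show (1:ℕ) = 0+1 from rfl, iteratedDeriv_succ, iteratedDeriv_zero]
    exact E4.eq_of_nhds
  have i5 : iteratedDeriv 5 (fun x => Real.log (Cg α x)) 0 = P4 α 0 := by
    rw [show (5:ℕ) = 4+1 from rfl, iteratedDeriv_succ,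
      show (4:ℕ) = 3+1 from rfl, iteratedDeriv_succ,
      show (3:ℕ) = 2+1 from rfl, iteratedDeriv_succ,
      show (2:ℕ) = 1+1 from rfl, iteratedDeriv_succ,
      show (1:ℕ) = 0+1 from rfl, iteratedDeriv_succ, iteratedDeriv_zero]
    exact E5.eq_of_nhds
  -- values at 0
  have hH0 : Hg α 0 = α := by
    simp only [Hg, Dg, hC0, mul_zero, Real.sinh_zero, Real.cosh_zero]
    field_simp
    ring
  rw [i3, i4, i5]
  simp only [P4, P3, P2, P1, hH0, hS2]
  have hα' : α ≠ 0 := ne_of_gt hα0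
  field_simp
  ring
end

section
/- Write f = log C. Then −(1/4)·(f''(0) + 2·f'''(0) + f''''(0)) = g·(1 − 2α)(5 − 6α) / (32α); equivalently, the operator −(1/4)(1 + d/dT)² applied to f'' and evaluated at T = 0 equals g(1 − 2α)(5 − 6α)/(32α). -/
open Real MeasureTheory Filter

/-- `−(1/4)(f''(0) + 2f'''(0) + f''''(0)) = g(1 − 2α)(5 − 6α)/(32α)` for `f = log C`,
`g = α/4 − α³`. -/
theorem stmt5 (α : ℝ) (h1 : 1 / (2 * Real.sqrt 3) < α) (h2 : α < 1 / 2) :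
    -(1 / 4) * (iteratedDeriv 2 (fun x => Real.log (Cg α x)) 0
        + 2 * iteratedDeriv 3 (fun x => Real.log (Cg α x)) 0
        + iteratedDeriv 4 (fun x => Real.log (Cg α x)) 0)
      = (α / 4 - α ^ 3) * (1 - 2 * α) * (5 - 6 * α) / (32 * α) := by
  have hsqrt3 : (0:ℝ) < Real.sqrt 3 := Real.sqrt_pos.mpr (by norm_num)
  have hα0 : 0 < α := lt_trans (by positivity) h1
  have hsq3 : (Real.sqrt 3) ^ 2 = 3 := Real.sq_sqrt (by norm_num)
  have hα2 : 1 / 12 < α ^ 2 := by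
    have := mul_self_lt_mul_self (by positivity) h1
    have h12 : (1 / (2 * Real.sqrt 3)) * (1 / (2 * Real.sqrt 3)) = 1 / 12 := by
      field_simp
      nlinarith [hsq3]
    nlinarith [this, h12]
  have hpos : 0 < 3 * α ^ 2 / 2 - 1 / 8 := by nlinarith
  set s := Sg α with hsdef
  have hs : 0 < s := Real.sqrt_pos.mpr hpos
  have hs2 : s ^ 2 = 3 * α ^ 2 / 2 - 1 / 8 := Real.sq_sqrt hpos.le
  set D : ℝ → ℝ := fun x => s * Real.sinh (s * x) + α * Real.cosh (s * x) with hDdef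
  set k : ℝ := s ^ 2 * (s ^ 2 - α ^ 2) with hkdef
  have hC : ∀ x : ℝ, HasDerivAt (Cg α) (s * D x) x := by
    intro x
    have hm : HasDerivAt (fun y : ℝ => s * y) s x := by
      simpa using (hasDerivAt_id x).const_mul s
    have h := (hm.cosh.const_mul s).add (hm.sinh.const_mul α)
    refine HasDerivAt.congr_deriv h (Eq.symm ?_)
    simp only [hDdef]; ring
  have hD : ∀ x : ℝ, HasDerivAt D (s * Cg α x) x := by
    intro x
    have hm : HasDerivAt (fun y : ℝ => s * y) s x := by
      simpa using (hasDerivAt_id x).const_mul s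
    have h := (hm.sinh.const_mul s).add (hm.cosh.const_mul α)
    refine HasDerivAt.congr_deriv h (Eq.symm ?_)
    simp [Cg, ← hsdef]; ring
  have hkey : ∀ x : ℝ, Cg α x ^ 2 - D x ^ 2 = s ^ 2 - α ^ 2 := by
    intro x
    have h := Real.cosh_sq_sub_sinh_sq (s * x)
    simp only [Cg, ← hsdef, hDdef]
    nlinarith [h]
  set U : Set ℝ := {x | 0 < Cg α x} with hUdef
  have hCcont : Continuous (Cg α) := by
    rw [continuous_iff_continuousAt]; exact fun x => (hC x).continuousAt
  have hUopen : IsOpen U := isOpen_lt continuous_const hCcont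
  have hC0 : Cg α 0 = s := by simp [Cg, ← hsdef]
  have hD0 : D 0 = α := by simp [hDdef]
  have h0U : (0:ℝ) ∈ U := by simp only [hUdef, Set.mem_setOf_eq, hC0]; exact hs
  set f : ℝ → ℝ := fun x => Real.log (Cg α x) with hfdef
  set f1 : ℝ → ℝ := fun x => s * D x / Cg α x with hf1def
  set f2 : ℝ → ℝ := fun x => k / (Cg α x) ^ 2 with hf2def
  set f3 : ℝ → ℝ := fun x => -2 * k * s * D x / (Cg α x) ^ 3 with hf3def
  have hdf : ∀ x ∈ U, HasDerivAt f (f1 x) x := fun x hx => (hC x).log (ne_of_gt hx)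
  have hdf1 : ∀ x ∈ U, HasDerivAt f1 (f2 x) x := by
    intro x hx
    have hne : Cg α x ≠ 0 := ne_of_gt hx
    have h := ((hD x).const_mul s).div (hC x) hne
    refine HasDerivAt.congr_deriv h (Eq.symm ?_)
    rw [hf2def]
    rw [div_eq_div_iff (by positivity) (by positivity)]
    have hk := hkey x
    simp only [hkdef]
    linear_combination (-(s ^ 2 * Cg α x ^ 2)) * hk
  have hdf2 : ∀ x ∈ U, HasDerivAt f2 (f3 x) x := by
    intro x hx
    have hne : Cg α x ≠ 0 := ne_of_gt hx
    have hpow : HasDerivAt (fun y => Cg α y ^ 2) (2 * Cg α x ^ 1 * (s * D x)) x := by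
      simpa using (hC x).fun_pow 2
    have h := (hasDerivAt_const x k).div hpow (by positivity)
    refine HasDerivAt.congr_deriv h (Eq.symm ?_)
    rw [hf3def]
    rw [div_eq_div_iff (by positivity) (by positivity)]
    ring
  have hE : HasDerivAt f3 (-2 * k * (s ^ 2 - 3 * α ^ 2) / s ^ 2) 0 := by
    have hne : Cg α 0 ≠ 0 := by rw [hC0]; exact ne_of_gt hs
    have hpow : HasDerivAt (fun y => Cg α y ^ 3) (3 * Cg α 0 ^ 2 * (s * D 0)) 0 := by
      simpa using (hC 0).fun_pow 3
    have h := ((hD 0).const_mul (-2 * k * s)).div hpow (by rw [hC0]; positivity)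
    refine HasDerivAt.congr_deriv h (Eq.symm ?_)
    rw [hC0, hD0]
    rw [div_eq_div_iff (by positivity) (by positivity)]
    ring
  have hEq1 : Set.EqOn (deriv f) f1 U := fun x hx => (hdf x hx).deriv
  have hEq2 : Set.EqOn (iteratedDeriv 2 f) f2 U := by
    intro x hx
    rw [iteratedDeriv_succ, iteratedDeriv_one]
    have hev : deriv f =ᶠ[nhds x] f1 :=
      Filter.eventually_of_mem (hUopen.mem_nhds hx) (fun y hy => hEq1 hy)
    rw [hev.deriv_eq, (hdf1 x hx).deriv]
  have hEq3 : Set.EqOn (iteratedDeriv 3 f) f3 U := by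
    intro x hx
    rw [iteratedDeriv_succ]
    have hev : iteratedDeriv 2 f =ᶠ[nhds x] f2 :=
      Filter.eventually_of_mem (hUopen.mem_nhds hx) (fun y hy => hEq2 hy)
    rw [hev.deriv_eq, (hdf2 x hx).deriv]
  have hval4 : iteratedDeriv 4 f 0 = -2 * k * (s ^ 2 - 3 * α ^ 2) / s ^ 2 := by
    rw [iteratedDeriv_succ]
    have hev : iteratedDeriv 3 f =ᶠ[nhds 0] f3 :=
      Filter.eventually_of_mem (hUopen.mem_nhds h0U) (fun y hy => hEq3 hy)
    rw [hev.deriv_eq, hE.deriv]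
  have hval2 : iteratedDeriv 2 f 0 = s ^ 2 - α ^ 2 := by
    rw [hEq2 h0U]
    show k / Cg α 0 ^ 2 = _
    rw [hC0, hkdef]
    field_simp
  have hval3 : iteratedDeriv 3 f 0 = -2 * (s ^ 2 - α ^ 2) * α := by
    rw [hEq3 h0U]
    show -2 * k * s * D 0 / Cg α 0 ^ 3 = _
    rw [hC0, hD0, hkdef]
    field_simp
  have hval4' : iteratedDeriv 4 f 0 = -2 * (s ^ 2 - α ^ 2) * (s ^ 2 - 3 * α ^ 2) := by
    rw [hval4, hkdef]
    field_simp
  show -(1 / 4) * (iteratedDeriv 2 f 0 + 2 * iteratedDeriv 3 f 0 + iteratedDeriv 4 f 0) = _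
  rw [hval2, hval3, hval4', hs2]
  field_simp
  ring
end

section
/- For every T > 0, the mixed partial derivative ∂_T ∂_S² ∂_U² F_odd(S,T,U) evaluated at S = U = 0 equals 4·(d/dT)[ ( (C'(T)/C(T))² − α² )² ]. -/
open Real MeasureTheory Filter
open Topology

/-- `Ĉ(T) = 2αΣ·cosh(ΣT) + (α²+Σ²)·sinh(ΣT)`. -/
noncomputable def Chat (α : ℝ) (T : ℝ) : ℝ :=
  2 * α * Sg α * Real.cosh (Sg α * T) + (α ^ 2 + Sg α ^ 2) * Real.sinh (Sg α * T)

/-- The even part of the three-point generating function. -/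
noncomputable def Feven (α : ℝ) (S T U : ℝ) : ℝ :=
  (1 / Sg α ^ 2) * (Cg α S ^ 2 * Cg α T ^ 2 * Cg α U ^ 2 * Cg α (S + T + U) ^ 2)
    / (Cg α (S + T) ^ 2 * Cg α (T + U) ^ 2 * Cg α (U + S) ^ 2)

/-- The odd part of the three-point generating function. -/
noncomputable def Fodd (α : ℝ) (S T U : ℝ) : ℝ :=
  ((α ^ 2 - Sg α ^ 2) ^ 2 / Sg α ^ 2) *
    (Real.sinh (Sg α * S) ^ 2 * Real.sinh (Sg α * T) ^ 2 * Real.sinh (Sg α * U) ^ 2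
      * Chat α (S + T + U) ^ 2)
    / (Cg α (S + T) ^ 2 * Cg α (T + U) ^ 2 * Cg α (U + S) ^ 2)

/-- `F = F_even + F_odd`. -/
noncomputable def Fg (α : ℝ) (S T U : ℝ) : ℝ := Feven α S T U + Fodd α S T U


lemma sinhsq_hasDerivAt (c x : ℝ) :
    HasDerivAt (fun u => Real.sinh (c*u)^2) (2*c*Real.sinh (c*x)*Real.cosh (c*x)) x := by
  have h : HasDerivAt (fun u => Real.sinh (c*u)) (Real.cosh (c*x) * (c*1)) x :=
    ((hasDerivAt_id x).const_mul c).sinh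
  have h2 := h.pow 2
  convert h2 using 1
  · rfl
  · rfl
  · rfl
  · ring

lemma keyA (c : ℝ) (g : ℝ → ℝ) (hg : ContDiffAt ℝ 2 g 0) :
    iteratedDeriv 2 (fun U => Real.sinh (c*U)^2 * g U) 0 = 2*c^2 * g 0 := by
  obtain ⟨u, hu, hgu⟩ := hg.contDiffOn le_rfl (by simp)
  obtain ⟨t, htu, ht, h0t⟩ := mem_nhds_iff.mp hu
  have hgt : ContDiffOn ℝ 2 g t := hgu.mono htu
  have hdiff : ∀ x ∈ t, DifferentiableAt ℝ g x := fun x hx =>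
    (hgt.contDiffAt (ht.mem_nhds hx)).differentiableAt (by norm_num)
  have hderivcont : ContinuousAt (deriv g) 0 :=
    (hgt.continuousOn_deriv_of_isOpen ht (by norm_num)).continuousAt (ht.mem_nhds h0t)
  have hev : deriv (fun U => Real.sinh (c*U)^2 * g U) =ᶠ[𝓝 (0:ℝ)]
      fun x => 2*c*Real.sinh (c*x)*Real.cosh (c*x) * g x + Real.sinh (c*x)^2 * deriv g x := by
    filter_upwards [ht.mem_nhds h0t] with x hx
    exact ((sinhsq_hasDerivAt c x).mul (hdiff x hx).hasDerivAt).deriv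
  have hredef : iteratedDeriv 2 (fun U => Real.sinh (c*U)^2 * g U) 0
      = deriv (deriv (fun U => Real.sinh (c*U)^2 * g U)) 0 := by
    rw [iteratedDeriv_eq_iterate]; rfl
  rw [hredef, hev.deriv_eq]
  have hterm1 : HasDerivAt (fun x => 2*c*Real.sinh (c*x)*Real.cosh (c*x) * g x) (2*c^2 * g 0) 0 := by
    have hs : HasDerivAt (fun x => Real.sinh (c*x)) (Real.cosh (c*0) * (c*1)) 0 :=
      ((hasDerivAt_id 0).const_mul c).sinh
    have hc : HasDerivAt (fun x => Real.cosh (c*x)) (Real.sinh (c*0) * (c*1)) 0 :=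
      ((hasDerivAt_id 0).const_mul c).cosh
    have h3 := ((hs.mul hc).const_mul (2*c)).mul (hdiff 0 h0t).hasDerivAt
    convert h3 using 1
    · rfl
    · rfl
    · funext x; simp only [Pi.mul_apply]; ring
    · simp only [Pi.mul_apply, mul_zero, Real.sinh_zero, Real.cosh_zero]; ring
  have hterm2 : HasDerivAt (fun x => Real.sinh (c*x)^2 * deriv g x) 0 0 := by
    rw [hasDerivAt_iff_tendsto_slope]
    have h1 : Tendsto (slope (fun x => Real.sinh (c*x)^2) 0) (𝓝[≠] 0) (𝓝 0) := by
      have h := sinhsq_hasDerivAt c 0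
      rw [hasDerivAt_iff_tendsto_slope] at h
      simpa using h
    have h2 : Tendsto (deriv g) (𝓝[≠] (0:ℝ)) (𝓝 (deriv g 0)) :=
      hderivcont.continuousWithinAt.tendsto
    have h3 := h1.mul h2
    rw [zero_mul] at h3
    refine h3.congr' ?_
    filter_upwards [self_mem_nhdsWithin] with x hx
    have hx0 : x ≠ 0 := hx
    simp only [slope_def_field]
    simp [Real.sinh_zero]
    ring
  have h4 := (hterm1.add hterm2).deriv
  rw [add_zero] at h4
  exact h4

lemma contDiff_Cg (α : ℝ) {n : WithTop ℕ∞} : ContDiff ℝ n (Cg α) := by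
  unfold Cg
  exact (contDiff_const.mul (Real.contDiff_cosh.comp (contDiff_const.mul contDiff_id))).add
    (contDiff_const.mul (Real.contDiff_sinh.comp (contDiff_const.mul contDiff_id)))

lemma contDiff_Chat (α : ℝ) {n : WithTop ℕ∞} : ContDiff ℝ n (Chat α) := by
  unfold Chat
  exact (contDiff_const.mul (Real.contDiff_cosh.comp (contDiff_const.mul contDiff_id))).add
    (contDiff_const.mul (Real.contDiff_sinh.comp (contDiff_const.mul contDiff_id)))

lemma hasDerivAt_Cg_s8 (α x : ℝ) : HasDerivAt (Cg α)
    (Sg α^2 * Real.sinh (Sg α*x) + α*Sg α*Real.cosh (Sg α*x)) x := by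
  have h1 : HasDerivAt (fun y => Real.cosh (Sg α*y)) (Real.sinh (Sg α*x)*(Sg α*1)) x :=
    ((hasDerivAt_id x).const_mul (Sg α)).cosh
  have h2 : HasDerivAt (fun y => Real.sinh (Sg α*y)) (Real.cosh (Sg α*x)*(Sg α*1)) x :=
    ((hasDerivAt_id x).const_mul (Sg α)).sinh
  have h3 := (h1.const_mul (Sg α)).add (h2.const_mul α)
  convert h3 using 1
  · rfl
  · rfl
  · rfl
  · ring

lemma deriv_Cg (α : ℝ) : deriv (Cg α)
    = fun x => Sg α^2 * Real.sinh (Sg α*x) + α*Sg α*Real.cosh (Sg α*x) :=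
  funext fun x => (hasDerivAt_Cg_s8 α x).deriv

lemma Cg_zero (α : ℝ) : Cg α 0 = Sg α := by simp [Cg]

lemma Cg_pos {α : ℝ} (hα : 0 < α) (hS : 0 < Sg α) {x : ℝ} (hx : 0 ≤ x) : 0 < Cg α x :=
  add_pos_of_pos_of_nonneg (mul_pos hS (Real.cosh_pos _))
    (mul_nonneg hα.le (Real.sinh_nonneg_iff.mpr (by positivity)))


/-- For `T > 0`,
`∂_T ∂_S² ∂_U² F_odd(S,T,U)|_{S=U=0} = 4·(d/dT)[((C'(T)/C(T))² − α²)²]`. -/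
theorem stmt8 (α : ℝ) (h1 : 1 / (2 * Real.sqrt 3) < α) (h2 : α < 1 / 2) :
    ∀ T : ℝ, 0 < T →
      deriv (fun T' =>
          iteratedDeriv 2 (fun S' => iteratedDeriv 2 (fun U' => Fodd α S' T' U') 0) 0) T
        = 4 * deriv (fun T' => ((deriv (Cg α) T' / Cg α T') ^ 2 - α ^ 2) ^ 2) T := by
  have h3 : (0:ℝ) < Real.sqrt 3 := Real.sqrt_pos.mpr (by norm_num)
  have h3' : Real.sqrt 3 ^ 2 = 3 := Real.sq_sqrt (by norm_num)
  have hαpos : 0 < α := lt_trans (by positivity) h1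
  rw [div_lt_iff₀ (by positivity)] at h1
  have hq : (0:ℝ) < 3*α^2/2 - 1/8 := by nlinarith [mul_pos hαpos (mul_pos two_pos h3)]
  have hSpos : 0 < Sg α := Real.sqrt_pos.mpr hq
  intro T hT
  -- the pointwise identity for every positive T'
  have key : ∀ T' : ℝ, 0 < T' →
      iteratedDeriv 2 (fun S' => iteratedDeriv 2 (fun U' => Fodd α S' T' U') 0) 0
      = 4 * ((deriv (Cg α) T' / Cg α T') ^ 2 - α ^ 2) ^ 2 := by
    intro T' hT'
    have hCT' : 0 < Cg α T' := Cg_pos hαpos hSpos hT'.le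
    -- inner second U-derivative, for S' near 0
    have hinner : (fun S' => iteratedDeriv 2 (fun U' => Fodd α S' T' U') 0) =ᶠ[𝓝 (0:ℝ)]
        fun S' => Real.sinh (Sg α * S')^2 *
          (2*Sg α^2 * ((α^2 - Sg α^2)^2/Sg α^2) *
            (Real.sinh (Sg α*T')^2 * Chat α (S'+T')^2)
            / (Cg α (S'+T')^2 * Cg α T'^2 * Cg α S'^2)) := by
      have hcont : ContinuousAt (Cg α) 0 := (contDiff_Cg α (n:=1)).continuous.continuousAt
      have hev1 : ∀ᶠ S' in 𝓝 (0:ℝ), 0 < Cg α S' :=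
        hcont.eventually (eventually_gt_nhds (by rw [Cg_zero]; exact hSpos))
      have hev2 : ∀ᶠ S' in 𝓝 (0:ℝ), 0 < S' + T' := by
        have : ContinuousAt (fun S' : ℝ => S' + T') 0 :=
          (continuous_id.add continuous_const).continuousAt
        exact this.eventually (eventually_gt_nhds (by simpa using hT'))
      filter_upwards [hev1, hev2] with S' hS1 hS2
      have hCST : 0 < Cg α (S'+T') := Cg_pos hαpos hSpos hS2.le
      have hfodd : (fun U' => Fodd α S' T' U') = fun U => Real.sinh (Sg α*U)^2 *
          (((α^2 - Sg α^2)^2/Sg α^2) *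
            (Real.sinh (Sg α*S')^2 * Real.sinh (Sg α*T')^2 * Chat α (S'+T'+U)^2)
            / (Cg α (S'+T')^2 * Cg α (T'+U)^2 * Cg α (U+S')^2)) := by
        funext U
        simp only [Fodd]
        ring
      have hnum : ContDiff ℝ 2 (fun U : ℝ => ((α^2 - Sg α^2)^2/Sg α^2) *
          (Real.sinh (Sg α*S')^2 * Real.sinh (Sg α*T')^2 * Chat α (S'+T'+U)^2)) :=
        contDiff_const.mul (contDiff_const.mul
          (((contDiff_Chat α).comp (contDiff_const.add contDiff_id)).pow 2))
      have hden : ContDiff ℝ 2 (fun U : ℝ =>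
          Cg α (S'+T')^2 * Cg α (T'+U)^2 * Cg α (U+S')^2) :=
        (contDiff_const.mul (((contDiff_Cg α).comp (contDiff_const.add contDiff_id)).pow 2)).mul
          (((contDiff_Cg α).comp (contDiff_id.add contDiff_const)).pow 2)
      have hden0 : Cg α (S'+T')^2 * Cg α (T'+(0:ℝ))^2 * Cg α ((0:ℝ)+S')^2 ≠ 0 := by
        simp only [add_zero, zero_add]
        exact ne_of_gt (mul_pos (mul_pos (pow_pos hCST 2) (pow_pos hCT' 2)) (pow_pos hS1 2))
      have hg1 : ContDiffAt ℝ 2 (fun U : ℝ => ((α^2 - Sg α^2)^2/Sg α^2) *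
          (Real.sinh (Sg α*S')^2 * Real.sinh (Sg α*T')^2 * Chat α (S'+T'+U)^2)
          / (Cg α (S'+T')^2 * Cg α (T'+U)^2 * Cg α (U+S')^2)) 0 :=
        hnum.contDiffAt.div hden.contDiffAt hden0
      rw [hfodd, keyA _ _ hg1]
      simp only [add_zero, zero_add]
      ring
    rw [hinner.iteratedDeriv_eq 2]
    have hnum2 : ContDiff ℝ 2 (fun S' : ℝ => 2*Sg α^2 * ((α^2 - Sg α^2)^2/Sg α^2) *
        (Real.sinh (Sg α*T')^2 * Chat α (S'+T')^2)) :=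
      contDiff_const.mul (contDiff_const.mul
        (((contDiff_Chat α).comp (contDiff_id.add contDiff_const)).pow 2))
    have hden2 : ContDiff ℝ 2 (fun S' : ℝ =>
        Cg α (S'+T')^2 * Cg α T'^2 * Cg α S'^2) :=
      ((((contDiff_Cg α).comp (contDiff_id.add contDiff_const)).pow 2).mul contDiff_const).mul
        ((contDiff_Cg α).pow 2)
    have hden20 : Cg α ((0:ℝ)+T')^2 * Cg α T'^2 * Cg α (0:ℝ)^2 ≠ 0 := by
      simp only [zero_add, Cg_zero]
      exact ne_of_gt (mul_pos (mul_pos (pow_pos hCT' 2) (pow_pos hCT' 2)) (pow_pos hSpos 2))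
    have hh : ContDiffAt ℝ 2 (fun S' : ℝ => 2*Sg α^2 * ((α^2 - Sg α^2)^2/Sg α^2) *
        (Real.sinh (Sg α*T')^2 * Chat α (S'+T')^2)
        / (Cg α (S'+T')^2 * Cg α T'^2 * Cg α S'^2)) 0 :=
      hnum2.contDiffAt.div hden2.contDiffAt hden20
    rw [keyA _ _ hh]
    -- now pure algebra
    have hid : deriv (Cg α) T'^2 - α^2 * Cg α T'^2
        = (Sg α^2 - α^2) * Real.sinh (Sg α*T') * Chat α T' := by
      rw [deriv_Cg]
      simp only [Cg, Chat]
      ring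
    have hstep : (deriv (Cg α) T' / Cg α T')^2 - α^2
        = (Sg α^2 - α^2) * Real.sinh (Sg α*T') * Chat α T' / Cg α T'^2 := by
      rw [← hid]
      field_simp
    rw [hstep]
    simp only [zero_add, Cg_zero]
    field_simp
    ring
  have hfun_ev : (fun T' =>
      iteratedDeriv 2 (fun S' => iteratedDeriv 2 (fun U' => Fodd α S' T' U') 0) 0)
      =ᶠ[𝓝 T] fun T' => 4 * ((deriv (Cg α) T' / Cg α T') ^ 2 - α ^ 2) ^ 2 := by
    filter_upwards [isOpen_Ioi.mem_nhds hT] with x hx using key x hx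
  rw [hfun_ev.deriv_eq]
  have hCT : Cg α T ≠ 0 := ne_of_gt (Cg_pos hαpos hSpos hT.le)
  have hR : DifferentiableAt ℝ (fun T' => ((deriv (Cg α) T' / Cg α T') ^ 2 - α ^ 2) ^ 2) T := by
    simp only [deriv_Cg]
    have hnum : DifferentiableAt ℝ
        (fun x : ℝ => Sg α^2 * Real.sinh (Sg α*x) + α*Sg α*Real.cosh (Sg α*x)) T := by
      fun_prop
    have hden : DifferentiableAt ℝ (Cg α) T :=
      (contDiff_Cg α (n:=1)).differentiable (by norm_num) T
    exact (((hnum.div hden hCT).pow 2).sub_const _).pow 2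
  exact deriv_const_mul 4 hR
end

section
/- Set β = (α − Σ)/(α + Σ), so 0 < β < 1. For every w > 0 the integrals below converge and ∫₀^∞ e^{−wT} · (log C)''(T) dT = −2Σ · β^{−w/(2Σ)} · ∫₀^β x^{w/(2Σ)} / (1 − x)² dx. -/
open Real MeasureTheory Filter

set_option maxHeartbeats 2000000 in
/-- With `β = (α − Σ)/(α + Σ) ∈ (0,1)`: for every `w > 0` the integrals converge and
`∫₀^∞ e^{−wT} (log C)''(T) dT = −2Σ β^{−w/(2Σ)} ∫₀^β x^{w/(2Σ)}/(1 − x)² dx`. -/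
theorem stmt12 (α : ℝ) (h1 : 1 / (2 * Real.sqrt 3) < α) (h2 : α < 1 / 2)
    (β : ℝ) (hβ : β = (α - Sg α) / (α + Sg α)) :
    0 < β ∧ β < 1 ∧
    ∀ w : ℝ, 0 < w →
      IntegrableOn (fun T => Real.exp (-w * T)
          * iteratedDeriv 2 (fun x => Real.log (Cg α x)) T) (Set.Ioi 0) ∧
      IntegrableOn (fun x : ℝ => x ^ (w / (2 * Sg α)) / (1 - x) ^ 2) (Set.Ioo 0 β) ∧
      (∫ T in Set.Ioi (0 : ℝ),
          Real.exp (-w * T) * iteratedDeriv 2 (fun x => Real.log (Cg α x)) T)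
        = -2 * Sg α * β ^ (-(w / (2 * Sg α)))
            * ∫ x in Set.Ioo (0 : ℝ) β, x ^ (w / (2 * Sg α)) / (1 - x) ^ 2 := by
  have hsqrt3 : (0:ℝ) < Real.sqrt 3 := Real.sqrt_pos.mpr (by norm_num)
  have hα : 0 < α := lt_trans (by positivity) h1
  have h3sq : Real.sqrt 3 ^ 2 = 3 := Real.sq_sqrt (by norm_num)
  have h1' : 1 < 2 * Real.sqrt 3 * α := by
    rw [div_lt_iff₀ (by positivity)] at h1; linarith
  have hα2 : 1 < 12 * α ^ 2 := by nlinarith [h1', hsqrt3, hα]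
  set s := Sg α with hs_def
  have hs2 : s ^ 2 = 3 * α ^ 2 / 2 - 1 / 8 := Real.sq_sqrt (by nlinarith)
  have hs0 : 0 < s := Real.sqrt_pos.mpr (by nlinarith)
  have hsα : s < α := by nlinarith
  have hβ0 : 0 < β := by rw [hβ]; exact div_pos (by linarith) (by linarith)
  have hβ1 : β < 1 := by
    rw [hβ, div_lt_one (by linarith)]; linarith
  refine ⟨hβ0, hβ1, ?_⟩
  -- the exponential form of Cg
  set a : ℝ := (s + α) / 2 with ha_def
  set b : ℝ := (s - α) / 2 with hb_def
  have ha : 0 < a := by rw [ha_def]; linarith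
  have hab : b = -(β * a) := by
    rw [hb_def, ha_def, hβ]; field_simp; ring
  set D : ℝ → ℝ := fun T => a * Real.exp (s * T) + b * Real.exp (-(s * T)) with hD_def
  set D1 : ℝ → ℝ := fun T => s * (a * Real.exp (s * T) - b * Real.exp (-(s * T)))
    with hD1_def
  have hCD : ∀ T, Cg α T = D T := by
    intro T
    simp only [Cg, ← hs_def, Real.cosh_eq, Real.sinh_eq, hD_def, ha_def, hb_def]
    ring
  have hDcont : Continuous D := by
    rw [hD_def]; fun_prop
  have hDpos : ∀ x : ℝ, 0 ≤ x → 0 < D x := by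
    intro x hx
    have he : Real.exp (-(s * x)) ≤ Real.exp (s * x) := by
      apply Real.exp_le_exp.mpr; nlinarith
    have h1 : a * Real.exp (-(s * x)) ≤ a * Real.exp (s * x) :=
      mul_le_mul_of_nonneg_left he ha.le
    have h2 : 0 < s * Real.exp (-(s * x)) := mul_pos hs0 (Real.exp_pos _)
    have h3 : a + b = s := by rw [ha_def, hb_def]; ring
    simp only [hD_def]
    nlinarith [Real.exp_pos (-(s * x))]
  set U : Set ℝ := {x | 0 < D x} with hU_def
  have hUopen : IsOpen U := isOpen_lt continuous_const hDcont
  have hUmem : ∀ x : ℝ, 0 ≤ x → x ∈ U := fun x hx => hDpos x hx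
  -- derivatives
  have hD' : ∀ x : ℝ, HasDerivAt D (D1 x) x := by
    intro x
    have h1 : HasDerivAt (fun y : ℝ => Real.exp (s * y)) (Real.exp (s * x) * (s * 1)) x :=
      ((hasDerivAt_id x).const_mul s).exp
    have h2 : HasDerivAt (fun y : ℝ => Real.exp (-(s * y)))
        (Real.exp (-(s * x)) * (-(s * 1))) x := (((hasDerivAt_id x).const_mul s).neg).exp
    have h := (h1.const_mul a).add (h2.const_mul b)
    simp only [hD_def, hD1_def]
    exact h.congr_deriv (by ring)
  have hD1' : ∀ x : ℝ, HasDerivAt D1 (s ^ 2 * D x) x := by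
    intro x
    have h1 : HasDerivAt (fun y : ℝ => Real.exp (s * y)) (Real.exp (s * x) * (s * 1)) x :=
      ((hasDerivAt_id x).const_mul s).exp
    have h2 : HasDerivAt (fun y : ℝ => Real.exp (-(s * y)))
        (Real.exp (-(s * x)) * (-(s * 1))) x := (((hasDerivAt_id x).const_mul s).neg).exp
    have h := ((h1.const_mul a).sub (h2.const_mul b)).const_mul s
    simp only [hD_def, hD1_def]
    exact h.congr_deriv (by ring)
  have hfeq : (fun y : ℝ => Real.log (Cg α y)) = fun y => Real.log (D y) := by
    funext y; rw [hCD]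
  have hf : ∀ x ∈ U, HasDerivAt (fun y : ℝ => Real.log (Cg α y)) (D1 x / D x) x := by
    intro x hx
    rw [hfeq]
    exact (hD' x).log (ne_of_gt hx)
  -- the second derivative on U
  have hkey : ∀ T ∈ U, iteratedDeriv 2 (fun x => Real.log (Cg α x)) T
      = 4 * a * b * s ^ 2 / (D T) ^ 2 := by
    intro T hT
    rw [iteratedDeriv_succ, iteratedDeriv_one]
    have hev : deriv (fun x => Real.log (Cg α x)) =ᶠ[nhds T] fun x => D1 x / D x :=
      Filter.eventuallyEq_of_mem (hUopen.mem_nhds hT) (fun x hx => (hf x hx).deriv)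
    rw [hev.deriv_eq]
    have hq : HasDerivAt (fun x => D1 x / D x)
        ((s ^ 2 * D T * D T - D1 T * D1 T) / D T ^ 2) T :=
      (hD1' T).div (hD' T) (ne_of_gt hT)
    rw [hq.deriv]
    have hEE : Real.exp (s * T) * Real.exp (-(s * T)) = 1 := by
      rw [← Real.exp_add]; simp
    have hnum : s ^ 2 * D T * D T - D1 T * D1 T = 4 * a * b * s ^ 2 := by
      simp only [hD_def, hD1_def]
      linear_combination (4 * a * b * s ^ 2) * hEE
    rw [hnum]
  -- positivity of 1 - β e^{-2sT} for T ≥ 0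
  have hφlt : ∀ T : ℝ, 0 ≤ T → β * Real.exp (-(2 * s) * T) < 1 := by
    intro T hT
    have hle : Real.exp (-(2 * s) * T) ≤ 1 := Real.exp_le_one_iff.mpr (by nlinarith)
    nlinarith [Real.exp_pos (-(2 * s) * T)]
  have hDfac : ∀ T : ℝ, D T = a * Real.exp (s * T) * (1 - β * Real.exp (-(2 * s) * T)) := by
    intro T
    have h2' : Real.exp (s * T) * Real.exp (-(2 * s) * T) = Real.exp (-(s * T)) := by
      rw [← Real.exp_add]; ring_nf
    simp only [hD_def, hab]
    linear_combination a * β * h2'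
  -- closed form of the second derivative on [0,∞)
  have hkey2 : ∀ T : ℝ, 0 ≤ T → iteratedDeriv 2 (fun x => Real.log (Cg α x)) T
      = -4 * s ^ 2 * β * Real.exp (-(2 * s) * T)
          / (1 - β * Real.exp (-(2 * s) * T)) ^ 2 := by
    intro T hT
    rw [hkey T (hUmem T hT), hDfac T]
    have h1 : (0:ℝ) < 1 - β * Real.exp (-(2 * s) * T) := by linarith [hφlt T hT]
    have hG : Real.exp (-(2 * s) * T) * Real.exp (s * T) ^ 2 = 1 := by
      rw [sq, ← Real.exp_add, ← Real.exp_add,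
        show -(2 * s) * T + (s * T + s * T) = 0 by ring, Real.exp_zero]
    rw [div_eq_div_iff (by positivity) (by positivity)]
    simp only [hab]
    linear_combination (4 * a ^ 2 * s ^ 2 * β
      * (1 - β * Real.exp (-(2 * s) * T)) ^ 2) * hG
  -- main part
  intro w hw
  set c : ℝ := w / (2 * s) with hc_def
  set φ : ℝ → ℝ := fun T => β * Real.exp (-(2 * s) * T) with hφ_def
  set φ' : ℝ → ℝ := fun T => -(2 * s) * (β * Real.exp (-(2 * s) * T)) with hφ'_def
  set G : ℝ → ℝ := fun x => x ^ c / (1 - x) ^ 2 with hG_def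
  set H : ℝ → ℝ := fun T => Real.exp (-w * T)
    * (-4 * s ^ 2 * β * Real.exp (-(2 * s) * T)
        / (1 - β * Real.exp (-(2 * s) * T)) ^ 2) with hH_def
  have hφd : ∀ T : ℝ, HasDerivAt φ (φ' T) T := by
    intro T
    have h1 : HasDerivAt (fun y : ℝ => Real.exp (-(2 * s) * y))
        (Real.exp (-(2 * s) * T) * (-(2 * s) * 1)) T :=
      ((hasDerivAt_id T).const_mul (-(2 * s))).exp
    have h := h1.const_mul β
    simp only [hφ_def, hφ'_def]
    exact h.congr_deriv (by ring)
  have hinj : Set.InjOn φ (Set.Ioi 0) := by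
    intro x _ y _ hxy
    simp only [hφ_def] at hxy
    have := mul_left_cancel₀ (ne_of_gt hβ0) hxy
    have := Real.exp_injective this
    exact mul_left_cancel₀ (ne_of_lt (by nlinarith : (-(2 * s) : ℝ) < 0)) this
  have himg : φ '' Set.Ioi 0 = Set.Ioo 0 β := by
    ext y
    constructor
    · rintro ⟨T, hT, rfl⟩
      refine ⟨by positivity, ?_⟩
      have he : Real.exp (-(2 * s) * T) < 1 := by
        apply Real.exp_lt_one_iff.mpr
        have := Set.mem_Ioi.mp hT
        nlinarith
      simpa only [hφ_def] using mul_lt_of_lt_one_right hβ0 he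
    · rintro ⟨hy0, hyβ⟩
      refine ⟨Real.log (β / y) / (2 * s), ?_, ?_⟩
      · apply div_pos (Real.log_pos ?_) (by linarith)
        rw [lt_div_iff₀ hy0]; linarith
      · simp only [hφ_def]
        rw [show -(2 * s) * (Real.log (β / y) / (2 * s)) = -Real.log (β / y) by
          field_simp, Real.exp_neg, Real.exp_log (by positivity), inv_div,
          mul_comm, div_mul_cancel₀ _ (ne_of_gt hβ0)]
  have hd : ∀ T ∈ Set.Ioi (0:ℝ), HasDerivWithinAt φ (φ' T) (Set.Ioi 0) T :=
    fun T _ => (hφd T).hasDerivWithinAt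
  -- integrability of H
  have hHcont : ContinuousOn H (Set.Ioi 0) := by
    have hden : ∀ T ∈ Set.Ioi (0:ℝ), (1 - β * Real.exp (-(2 * s) * T)) ^ 2 ≠ 0 := by
      intro T hT
      have := hφlt T (le_of_lt (Set.mem_Ioi.mp hT))
      exact pow_ne_zero 2 (ne_of_gt (by linarith))
    apply ContinuousOn.mul (by fun_prop)
    exact ContinuousOn.div (by fun_prop) (by fun_prop) hden
  have hHbound : ∀ T ∈ Set.Ioi (0:ℝ),
      ‖H T‖ ≤ 4 * s ^ 2 * β / (1 - β) ^ 2 * Real.exp (-w * T) := by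
    intro T hT
    have hT0 : (0:ℝ) ≤ T := le_of_lt (Set.mem_Ioi.mp hT)
    have he1 : Real.exp (-(2 * s) * T) ≤ 1 := Real.exp_le_one_iff.mpr (by nlinarith)
    have hφT : β * Real.exp (-(2 * s) * T) < 1 := hφlt T hT0
    have hmono : 1 - β ≤ 1 - β * Real.exp (-(2 * s) * T) := by
      nlinarith [Real.exp_pos (-(2 * s) * T)]
    have hq : 4 * s ^ 2 * β * Real.exp (-(2 * s) * T)
        / (1 - β * Real.exp (-(2 * s) * T)) ^ 2 ≤ 4 * s ^ 2 * β / (1 - β) ^ 2 := by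
      exact div_le_div₀ (by positivity)
        (mul_le_of_le_one_right (by positivity) he1)
        (pow_pos (by linarith : (0:ℝ) < 1 - β) 2)
        (pow_le_pow_left₀ (by linarith) hmono 2)
    have hHval : ‖H T‖ = Real.exp (-w * T)
        * (4 * s ^ 2 * β * Real.exp (-(2 * s) * T)
            / (1 - β * Real.exp (-(2 * s) * T)) ^ 2) := by
      simp only [hH_def, Real.norm_eq_abs, abs_mul]
      rw [abs_of_pos (Real.exp_pos _), abs_div,
        abs_of_pos (pow_pos (by linarith [hφlt T hT0] : (0:ℝ) < 1 - β * Real.exp (-(2 * s) * T)) 2),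
        abs_of_neg (show -4 * s ^ 2 * β * Real.exp (-(2 * s) * T) < 0 by
          have : (0:ℝ) < 4 * s ^ 2 * β * Real.exp (-(2 * s) * T) := by positivity
          linarith)]
      ring
    rw [hHval]
    calc Real.exp (-w * T) * (4 * s ^ 2 * β * Real.exp (-(2 * s) * T)
          / (1 - β * Real.exp (-(2 * s) * T)) ^ 2)
        ≤ Real.exp (-w * T) * (4 * s ^ 2 * β / (1 - β) ^ 2) :=
          mul_le_mul_of_nonneg_left hq (Real.exp_pos _).le
      _ = 4 * s ^ 2 * β / (1 - β) ^ 2 * Real.exp (-w * T) := by ring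
  have hHint : IntegrableOn H (Set.Ioi 0) := by
    apply Integrable.mono' ((exp_neg_integrableOn_Ioi 0 hw).const_mul
      (4 * s ^ 2 * β / (1 - β) ^ 2))
    · exact hHcont.aestronglyMeasurable measurableSet_Ioi
    · rw [ae_restrict_iff' measurableSet_Ioi]
      exact Filter.Eventually.of_forall hHbound
  -- the integrand equals H on Ioi 0
  have hFH : Set.EqOn (fun T => Real.exp (-w * T)
      * iteratedDeriv 2 (fun x => Real.log (Cg α x)) T) H (Set.Ioi 0) := by
    intro T hT
    show Real.exp (-w * T) * iteratedDeriv 2 (fun x => Real.log (Cg α x)) T = H T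
    simp only [hH_def]
    rw [hkey2 T (le_of_lt (Set.mem_Ioi.mp hT))]
  have hFint : IntegrableOn (fun T => Real.exp (-w * T)
      * iteratedDeriv 2 (fun x => Real.log (Cg α x)) T) (Set.Ioi 0) :=
    hHint.congr_fun (fun T hT => (hFH hT).symm) measurableSet_Ioi
  -- rpow facts
  have hβc : (0:ℝ) < β ^ c := Real.rpow_pos_of_pos hβ0 c
  have hφc : ∀ T : ℝ, (φ T) ^ c = β ^ c * Real.exp (-w * T) := by
    intro T
    simp only [hφ_def]
    rw [Real.mul_rpow hβ0.le (Real.exp_pos _).le, ← Real.exp_mul]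
    congr 1
    have hinv : s * s⁻¹ = 1 := mul_inv_cancel₀ (ne_of_gt hs0)
    rw [Real.exp_eq_exp, hc_def]
    field_simp [ne_of_gt hs0]
  -- pointwise relation between H and the substituted integrand
  have hPW : ∀ T ∈ Set.Ioi (0:ℝ),
      H T = (-2 * s * β ^ (-c)) * (|φ' T| • G (φ T)) := by
    intro T hT
    have hT0 : (0:ℝ) ≤ T := le_of_lt (Set.mem_Ioi.mp hT)
    have habs : |φ' T| = 2 * s * (β * Real.exp (-(2 * s) * T)) := by
      simp only [hφ'_def]
      rw [abs_mul, abs_of_pos (by positivity : (0:ℝ) < β * Real.exp (-(2 * s) * T)),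
        abs_of_neg (by nlinarith : (-(2 * s) : ℝ) < 0)]
      ring
    have hβneg : β ^ (-c) = (β ^ c)⁻¹ := Real.rpow_neg hβ0.le c
    have hcc : (β ^ c)⁻¹ * β ^ c = 1 := inv_mul_cancel₀ (ne_of_gt hβc)
    simp only [hG_def, smul_eq_mul]
    rw [habs, hφc T, hβneg, hH_def]
    simp only [hφ_def]
    linear_combination (4 * s ^ 2 * β * Real.exp (-(2 * s) * T) * Real.exp (-w * T)
      / (1 - β * Real.exp (-(2 * s) * T)) ^ 2) * hcc
  -- the substitution
  have hsub := integral_image_eq_integral_abs_deriv_smul measurableSet_Ioi hd hinj G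
  rw [himg] at hsub
  have hiff := integrableOn_image_iff_integrableOn_abs_deriv_smul measurableSet_Ioi hd hinj G
  rw [himg] at hiff
  have hGsub_int : IntegrableOn (fun T => |φ' T| • G (φ T)) (Set.Ioi 0) := by
    have h1 : IntegrableOn (fun T => (-2 * s * β ^ (-c))⁻¹ * H T) (Set.Ioi 0) :=
      hHint.const_mul _
    apply h1.congr_fun ?_ measurableSet_Ioi
    intro T hT
    have hK : (-2 * s * β ^ (-c)) ≠ 0 := by
      have h0 : (0:ℝ) < β ^ (-c) := Real.rpow_pos_of_pos hβ0 _
      exact mul_ne_zero (ne_of_lt (by nlinarith : (-2 * s : ℝ) < 0)) (ne_of_gt h0)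
    show (-2 * s * β ^ (-c))⁻¹ * H T = |φ' T| • G (φ T)
    rw [hPW T hT, inv_mul_cancel_left₀ hK]
  have hGint : IntegrableOn G (Set.Ioo 0 β) := hiff.mpr hGsub_int
  refine ⟨hFint, ?_, ?_⟩
  · convert hGint using 1
  · calc (∫ T in Set.Ioi (0:ℝ), Real.exp (-w * T)
          * iteratedDeriv 2 (fun x => Real.log (Cg α x)) T)
        = ∫ T in Set.Ioi (0:ℝ), H T :=
          setIntegral_congr_fun measurableSet_Ioi hFH
      _ = ∫ T in Set.Ioi (0:ℝ), (-2 * s * β ^ (-c)) * (|φ' T| • G (φ T)) :=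
          setIntegral_congr_fun measurableSet_Ioi hPW
      _ = (-2 * s * β ^ (-c)) * ∫ T in Set.Ioi (0:ℝ), |φ' T| • G (φ T) :=
          MeasureTheory.integral_const_mul _ _
      _ = (-2 * s * β ^ (-c)) * ∫ x in Set.Ioo (0:ℝ) β, G x := by rw [hsub]
      _ = -2 * Sg α * β ^ (-(w / (2 * Sg α)))
            * ∫ x in Set.Ioo (0:ℝ) β, x ^ (w / (2 * Sg α)) / (1 - x) ^ 2 := by
          simp only [hG_def, hc_def, hs_def]
end

section
/- Set β = (α − Σ)/(α + Σ), so 0 < β < 1. For every w > 0 the integrals below converge and ∫₀^∞ e^{−wT} · (log C)'''(T) dT = α² − Σ² − 2wΣ · β^{−w/(2Σ)} · ∫₀^β x^{w/(2Σ)} / (1 − x)² dx. (The last integral is the incomplete beta function B_β(1 + w/(2Σ), −1).) -/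
open Real MeasureTheory Filter

lemma d3 (S b c : ℝ) (hS : 0 < S) (hb0 : 0 < b) (hc : 0 < c)
    {T : ℝ} (hT : b * Real.exp (-(2*S)*T) < 1) :
    iteratedDeriv 3 (fun x => Real.log (c * (Real.exp (S*x) - b * Real.exp (-(S*x))))) T
      = 8*S^3 * (b*Real.exp (-(2*S)*T)) * (1 + b*Real.exp (-(2*S)*T))
          / (1 - b*Real.exp (-(2*S)*T))^3 := by
  set u : ℝ → ℝ := fun x => b * Real.exp (-(2*S)*x) with hu_def
  set U : Set ℝ := {x | u x < 1} with hU_def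
  have hTU : T ∈ U := hT
  have hUopen : IsOpen U := by
    have : Continuous u := by fun_prop
    exact isOpen_lt this continuous_const
  have hu : ∀ x, HasDerivAt u (-(2*S) * u x) x := by
    intro x
    have h1 : HasDerivAt (fun y : ℝ => -(2*S)*y) (-(2*S)) x := by
      simpa using (hasDerivAt_id x).const_mul (-(2*S))
    have := (h1.exp).const_mul b
    refine this.congr_deriv ?_
    simp [hu_def]; ring
  have hupos : ∀ x, 0 < u x := fun x => mul_pos hb0 (Real.exp_pos _)
  have h1u : ∀ x ∈ U, 0 < 1 - u x := by
    intro x hx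
    simp only [hU_def, Set.mem_setOf_eq] at hx
    linarith
  have hfac : ∀ x, Real.exp (S*x) - b*Real.exp (-(S*x)) = Real.exp (S*x) * (1 - u x) := by
    intro x
    rw [mul_sub, mul_one, hu_def]
    have : Real.exp (S*x) * Real.exp (-(2*S)*x) = Real.exp (-(S*x)) := by
      rw [← Real.exp_add]; ring_nf
    rw [← mul_assoc, mul_comm (Real.exp (S*x)) b, mul_assoc, this]
  have hCpos : ∀ x ∈ U, 0 < c * (Real.exp (S*x) - b * Real.exp (-(S*x))) := by
    intro x hx
    rw [hfac x]
    exact mul_pos hc (mul_pos (Real.exp_pos _) (h1u x hx))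
  -- step 1
  have step1 : ∀ x ∈ U, HasDerivAt (fun y => Real.log (c * (Real.exp (S*y) - b * Real.exp (-(S*y)))))
      (S*(1+u x)/(1-u x)) x := by
    intro x hx
    have he1 : HasDerivAt (fun y : ℝ => S*y) S x := by simpa using (hasDerivAt_id x).const_mul S
    have he2 : HasDerivAt (fun y : ℝ => -(S*y)) (-S) x := he1.neg
    have hC : HasDerivAt (fun y => c * (Real.exp (S*y) - b * Real.exp (-(S*y))))
        (c * (Real.exp (S*x) * S - b * (Real.exp (-(S*x)) * (-S)))) x :=
      ((he1.exp).sub ((he2.exp).const_mul b)).const_mul c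
    have hlog := hC.log (ne_of_gt (hCpos x hx))
    have e1 : Real.exp (-(S*x)) = (Real.exp (S*x))⁻¹ := Real.exp_neg _
    have e2 : Real.exp (-(2*S)*x) = (Real.exp (S*x))⁻¹ * (Real.exp (S*x))⁻¹ := by
      rw [← e1, ← Real.exp_add]; ring_nf
    have hen : Real.exp (S*x) ≠ 0 := (Real.exp_pos _).ne'
    have h1un : (1 - u x) ≠ 0 := (h1u x hx).ne'
    have hden1 : c * (Real.exp (S*x) - b * Real.exp (-(S*x))) ≠ 0 := (hCpos x hx).ne'
    have hval : c * (Real.exp (S*x) * S - b * (Real.exp (-(S*x)) * (-S)))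
        / (c * (Real.exp (S*x) - b * Real.exp (-(S*x)))) = S*(1+u x)/(1-u x) := by
      rw [div_eq_div_iff hden1 h1un]
      simp only [hu_def, e2, e1]
      field_simp
      ring
    rw [hval] at hlog
    exact hlog
  -- step 2
  have step2 : ∀ x ∈ U, HasDerivAt (fun y => S*(1+u y)/(1-u y))
      (-(4*S^2) * u x/(1-u x)^2) x := by
    intro x hx
    have hnum : HasDerivAt (fun y => S*(1+u y)) (S*(-(2*S) * u x)) x :=
      ((hu x).const_add 1).const_mul S
    have hden : HasDerivAt (fun y => 1 - u y) (-(-(2*S) * u x)) x := (hu x).const_sub 1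
    have h1un : (1 - u x) ≠ 0 := (h1u x hx).ne'
    have := hnum.div hden h1un
    refine this.congr_deriv ?_
    field_simp
    ring
  -- step 3
  have step3 : ∀ x ∈ U, HasDerivAt (fun y => -(4*S^2) * u y/(1-u y)^2)
      (8*S^3 * u x * (1 + u x) / (1 - u x)^3) x := by
    intro x hx
    have hnum : HasDerivAt (fun y => -(4*S^2) * u y) (-(4*S^2) * (-(2*S) * u x)) x :=
      (hu x).const_mul _
    have hden : HasDerivAt (fun y => (1 - u y)^2)
        ((2 : ℕ) * (1 - u x)^(2-1) * (-(-(2*S) * u x))) x := ((hu x).const_sub 1).pow 2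
    have h1un : (1 - u x) ≠ 0 := (h1u x hx).ne'
    have h1un2 : ((1 - u x)^2) ≠ 0 := pow_ne_zero _ h1un
    have := hnum.div hden h1un2
    refine this.congr_deriv ?_
    field_simp
    ring
  -- assemble
  have hd1 : ∀ x ∈ U, deriv (fun y => Real.log (c * (Real.exp (S*y) - b * Real.exp (-(S*y))))) x
      = S*(1+u x)/(1-u x) := fun x hx => (step1 x hx).deriv
  have hd2 : ∀ x ∈ U, iteratedDeriv 2 (fun y => Real.log (c * (Real.exp (S*y) - b * Real.exp (-(S*y))))) x
      = -(4*S^2) * u x/(1-u x)^2 := by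
    intro x hx
    rw [iteratedDeriv_succ, iteratedDeriv_one]
    have hev : deriv (fun y => Real.log (c * (Real.exp (S*y) - b * Real.exp (-(S*y)))))
        =ᶠ[nhds x] (fun y => S*(1+u y)/(1-u y)) :=
      Filter.eventuallyEq_of_mem (hUopen.mem_nhds hx) hd1
    rw [hev.deriv_eq]
    exact (step2 x hx).deriv
  rw [iteratedDeriv_succ]
  have hev : iteratedDeriv 2 (fun y => Real.log (c * (Real.exp (S*y) - b * Real.exp (-(S*y)))))
      =ᶠ[nhds T] (fun y => -(4*S^2) * u y/(1-u y)^2) :=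
    Filter.eventuallyEq_of_mem (hUopen.mem_nhds hTU) hd2
  rw [hev.deriv_eq]
  exact (step3 T hTU).deriv

lemma basics (α : ℝ) (h1 : 1 / (2 * Real.sqrt 3) < α) (h2 : α < 1 / 2) :
    0 < α ∧ Sg α ^ 2 = 3 * α ^ 2 / 2 - 1 / 8 ∧ 0 < Sg α ∧ Sg α < α := by
  have h3 : Real.sqrt 3 ^ 2 = 3 := Real.sq_sqrt (by norm_num)
  have hs3 : 0 < Real.sqrt 3 := Real.sqrt_pos.mpr (by norm_num)
  have hα : 0 < α := lt_trans (by positivity) h1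
  have h1' : 1 < α * (2 * Real.sqrt 3) := (div_lt_iff₀ (by positivity)).mp h1
  have hα2 : 1 / 12 < α ^ 2 := by nlinarith
  have harg : 0 < 3 * α ^ 2 / 2 - 1 / 8 := by nlinarith
  have hS2 : Sg α ^ 2 = 3 * α ^ 2 / 2 - 1 / 8 := Real.sq_sqrt harg.le
  have hSpos : 0 < Sg α := Real.sqrt_pos.mpr harg
  have hSα : Sg α < α := by
    have : Real.sqrt (3 * α ^ 2 / 2 - 1 / 8) < α := (Real.sqrt_lt' hα).mpr (by nlinarith)
    exact this
  exact ⟨hα, hS2, hSpos, hSα⟩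

lemma Cg_exp (α : ℝ) (hA : 0 < α + Sg α) (β : ℝ) (hβ : β = (α - Sg α) / (α + Sg α)) (T : ℝ) :
    Cg α T = (α + Sg α) / 2 * (Real.exp (Sg α * T) - β * Real.exp (-(Sg α * T))) := by
  rw [hβ]
  unfold Cg
  rw [Real.cosh_eq, Real.sinh_eq]
  field_simp
  ring

lemma contOn (s : ℝ) (hs : 0 < s) (b : ℝ) (hb1 : b < 1) (p : ℝ → ℝ) (hp : Continuous p) (n : ℕ) :
    IntegrableOn (fun x : ℝ => x ^ s * p x / (1 - x) ^ n) (Set.Ioo 0 b) := by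
  apply (ContinuousOn.integrableOn_Icc ?_).mono_set Set.Ioo_subset_Icc_self
  intro x hx
  have hx1 : (1 : ℝ) - x ≠ 0 := ne_of_gt (by linarith [hx.2])
  exact (((Real.continuousAt_rpow_const x s (Or.inr hs.le)).mul hp.continuousAt).div
    ((continuous_const.sub continuous_id).pow n).continuousAt (pow_ne_zero _ hx1)).continuousWithinAt

lemma ftc (s b : ℝ) (hs : 0 < s) (hb0 : 0 < b) (hb1 : b < 1) :
    ∫ x in (0:ℝ)..b, (x ^ s * (1 + x) / (1 - x) ^ 3 + s * (x ^ s / (1 - x) ^ 2))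
      = b ^ (s + 1) / (1 - b) ^ 2 := by
  have key : ∀ x ∈ Set.uIcc (0:ℝ) b, HasDerivAt (fun y : ℝ => y ^ (s+1) / (1 - y) ^ 2)
      (x ^ s * (1 + x) / (1 - x) ^ 3 + s * (x ^ s / (1 - x) ^ 2)) x := by
    intro x hx
    rw [Set.uIcc_of_le hb0.le] at hx
    have hx1 : (1 : ℝ) - x ≠ 0 := ne_of_gt (by linarith [hx.2])
    have hnum : HasDerivAt (fun y : ℝ => y ^ (s+1)) ((s+1) * x ^ (s+1-1)) x :=
      Real.hasDerivAt_rpow_const (Or.inr (by linarith))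
    have hden : HasDerivAt (fun y : ℝ => (1-y)^2) ((2:ℕ) * (1-x) ^ (2-1) * (-1)) x :=
      ((hasDerivAt_id x).const_sub 1).pow 2
    have hdiv := hnum.div hden (pow_ne_zero _ hx1)
    refine hdiv.congr_deriv ?_
    rcases eq_or_lt_of_le hx.1 with h0 | h0
    · rw [← h0]
      rw [show s+1-1 = s by ring]
      norm_num [Real.zero_rpow hs.ne', Real.zero_rpow (by positivity : s + 1 ≠ 0)]
    · have hx0 : x ≠ 0 := ne_of_gt h0
      rw [show s+1-1 = s by ring, Real.rpow_add_one hx0]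
      field_simp
      ring
  have hcont : ContinuousOn (fun x : ℝ => x ^ s * (1 + x) / (1 - x) ^ 3 + s * (x ^ s / (1 - x) ^ 2))
      (Set.uIcc 0 b) := by
    intro x hx
    rw [Set.uIcc_of_le hb0.le] at hx
    have hx1 : (1 : ℝ) - x ≠ 0 := ne_of_gt (by linarith [hx.2])
    have hrp := Real.continuousAt_rpow_const x s (Or.inr hs.le)
    exact (((hrp.mul (continuous_const.add continuous_id).continuousAt).div
      ((continuous_const.sub continuous_id).pow 3).continuousAt (pow_ne_zero _ hx1)).add
      (((hrp.div ((continuous_const.sub continuous_id).pow 2).continuousAt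
        (pow_ne_zero _ hx1))).const_mul s)).continuousWithinAt
  rw [intervalIntegral.integral_eq_sub_of_hasDerivAt key hcont.intervalIntegrable]
  norm_num [Real.zero_rpow (by positivity : s + 1 ≠ 0)]

lemma img (S b : ℝ) (hS : 0 < S) (hb : 0 < b) :
    (fun T => b * Real.exp (-(2*S)*T)) '' (Set.Ioi 0) = Set.Ioo 0 b := by
  ext y
  simp only [Set.mem_image, Set.mem_Ioi, Set.mem_Ioo]
  constructor
  · rintro ⟨T, hT, rfl⟩
    refine ⟨by positivity, ?_⟩
    have h1 : Real.exp (-(2*S)*T) < 1 := by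
      rw [Real.exp_lt_one_iff]
      nlinarith
    nlinarith [Real.exp_pos (-(2*S)*T)]
  · rintro ⟨hy0, hyb⟩
    refine ⟨Real.log (b / y) / (2*S), ?_, ?_⟩
    · apply div_pos (Real.log_pos ?_) (by positivity)
      rw [one_lt_div hy0]; exact hyb
    · rw [show -(2*S) * (Real.log (b/y) / (2*S)) = -Real.log (b/y) by field_simp]
      rw [Real.exp_neg, Real.exp_log (by positivity)]
      field_simp

lemma inj (S b : ℝ) (hS : 0 < S) (hb : 0 < b) :
    Set.InjOn (fun T => b * Real.exp (-(2*S)*T)) (Set.Ioi 0) := by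
  intro x _ y _ hxy
  simp only at hxy
  have h1 : Real.exp (-(2*S)*x) = Real.exp (-(2*S)*y) := mul_left_cancel₀ hb.ne' hxy
  have h2 : -(2*S)*x = -(2*S)*y := Real.exp_injective h1
  exact mul_left_cancel₀ (by simp [hS.ne'] : -(2*S) ≠ 0) h2

/-- With `β = (α − Σ)/(α + Σ) ∈ (0,1)`: for every `w > 0` the integrals converge and
`∫₀^∞ e^{−wT} (log C)'''(T) dT
  = α² − Σ² − 2wΣ β^{−w/(2Σ)} ∫₀^β x^{w/(2Σ)}/(1 − x)² dx`. -/
theorem stmt13 (α : ℝ) (h1 : 1 / (2 * Real.sqrt 3) < α) (h2 : α < 1 / 2)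
    (β : ℝ) (hβ : β = (α - Sg α) / (α + Sg α)) :
    0 < β ∧ β < 1 ∧
    ∀ w : ℝ, 0 < w →
      IntegrableOn (fun T => Real.exp (-w * T)
          * iteratedDeriv 3 (fun x => Real.log (Cg α x)) T) (Set.Ioi 0) ∧
      IntegrableOn (fun x : ℝ => x ^ (w / (2 * Sg α)) / (1 - x) ^ 2) (Set.Ioo 0 β) ∧
      (∫ T in Set.Ioi (0 : ℝ),
          Real.exp (-w * T) * iteratedDeriv 3 (fun x => Real.log (Cg α x)) T)
        = α ^ 2 - Sg α ^ 2 - 2 * w * Sg α * β ^ (-(w / (2 * Sg α)))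
            * ∫ x in Set.Ioo (0 : ℝ) β, x ^ (w / (2 * Sg α)) / (1 - x) ^ 2 := by
  obtain ⟨hα, hS2, hSpos, hSα⟩ := basics α h1 h2
  set S := Sg α with hS_def
  have hA : 0 < α + S := by linarith
  have hb0 : 0 < β := hβ ▸ div_pos (by linarith) hA
  have hb1 : β < 1 := by rw [hβ, div_lt_one hA]; linarith
  have h1b : 0 < 1 - β := by linarith
  refine ⟨hb0, hb1, ?_⟩
  intro w hw
  set s := w / (2 * S) with hs_def
  have hs : 0 < s := div_pos hw (by linarith)
  have hws : w = 2 * S * s := by rw [hs_def]; field_simp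
  have hβs : (0:ℝ) < β ^ s := Real.rpow_pos_of_pos hb0 s
  set φ : ℝ → ℝ := fun T => β * Real.exp (-(2*S)*T) with hφ_def
  have hu : ∀ x, HasDerivAt φ (-(2*S) * φ x) x := by
    intro x
    have h1' : HasDerivAt (fun y : ℝ => -(2*S)*y) (-(2*S)) x := by
      simpa using (hasDerivAt_id x).const_mul (-(2*S))
    have := (h1'.exp).const_mul β
    refine this.congr_deriv ?_
    simp [hφ_def]; ring
  have hφpos : ∀ x, 0 < φ x := fun x => mul_pos hb0 (Real.exp_pos _)
  have hφlt : ∀ T ∈ Set.Ioi (0:ℝ), φ T < 1 := by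
    intro T hT
    have h1' : Real.exp (-(2*S)*T) < 1 := by
      rw [Real.exp_lt_one_iff]
      simp only [Set.mem_Ioi] at hT
      nlinarith
    calc φ T < β * 1 := by
          simp only [hφ_def]
          exact mul_lt_mul_of_pos_left h1' hb0
      _ < 1 := by linarith
  -- the third derivative on Ioi 0
  have hfun : (fun x => Real.log (Cg α x))
      = fun x => Real.log ((α+S)/2 * (Real.exp (S*x) - β * Real.exp (-(S*x)))) :=
    funext fun x => by rw [Cg_exp α hA β hβ x]
  have hder : ∀ T ∈ Set.Ioi (0:ℝ), iteratedDeriv 3 (fun x => Real.log (Cg α x)) T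
      = 8*S^3 * φ T * (1 + φ T) / (1 - φ T)^3 := by
    intro T hT
    rw [hfun]
    exact d3 S β ((α+S)/2) hSpos hb0 (by positivity) (hφlt T hT)
  -- set-up of the h functions
  set h : ℝ → ℝ := fun x => x ^ s * (1 + x) / (1 - x) ^ 3 with hh_def
  have hint_h : IntegrableOn h (Set.Ioo 0 β) := contOn s hs β hb1 _ (by fun_prop) 3
  have hint_h2 : IntegrableOn (fun x : ℝ => x ^ s / (1 - x) ^ 2) (Set.Ioo 0 β) := by
    have := contOn s hs β hb1 (fun _ => (1:ℝ)) continuous_const 2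
    simpa using this
  -- change of variables
  have himg : φ '' Set.Ioi 0 = Set.Ioo 0 β := img S β hSpos hb0
  have hinj : Set.InjOn φ (Set.Ioi 0) := inj S β hSpos hb0
  have hderwithin : ∀ x ∈ Set.Ioi (0:ℝ), HasDerivWithinAt φ (-(2*S) * φ x) (Set.Ioi 0) x :=
    fun x _ => (hu x).hasDerivWithinAt
  have hiff := integrableOn_image_iff_integrableOn_abs_deriv_smul measurableSet_Ioi
    hderwithin hinj h
  rw [himg] at hiff
  have hint_T : IntegrableOn (fun x => |(-(2*S) * φ x)| • h (φ x)) (Set.Ioi 0) := hiff.mp hint_h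
  have hcov := integral_image_eq_integral_abs_deriv_smul measurableSet_Ioi hderwithin hinj h
  rw [himg] at hcov
  -- pointwise identity of the integrands
  have hpt : ∀ T ∈ Set.Ioi (0:ℝ),
      Real.exp (-w * T) * iteratedDeriv 3 (fun x => Real.log (Cg α x)) T
        = (4*S^2/β^s) * (|(-(2*S) * φ T)| • h (φ T)) := by
    intro T hT
    rw [hder T hT]
    have habs : |(-(2*S) * φ T)| = 2*S * φ T := by
      rw [abs_of_nonpos (by nlinarith [hφpos T])]
      ring
    have hexp : Real.exp (-w * T) = (φ T) ^ s / β ^ s := by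
      have h1' : (φ T) ^ s = β ^ s * Real.exp ((-(2*S)*T) * s) := by
        rw [Real.exp_mul]
        exact Real.mul_rpow hb0.le (Real.exp_pos _).le
      rw [h1', show (-(2*S)*T) * s = -w * T by rw [hws]; ring]
      field_simp
    rw [habs, hexp, smul_eq_mul, hh_def]
    have h1φ : (1 : ℝ) - φ T ≠ 0 := ne_of_gt (by linarith [hφlt T hT])
    field_simp
    ring
  -- integrability of the LHS
  have hmeas : MeasurableSet (Set.Ioi (0:ℝ)) := measurableSet_Ioi
  have hint1 : IntegrableOn (fun T => Real.exp (-w * T)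
      * iteratedDeriv 3 (fun x => Real.log (Cg α x)) T) (Set.Ioi 0) := by
    have hc : IntegrableOn (fun T => (4*S^2/β^s) * (|(-(2*S) * φ T)| • h (φ T)))
        (Set.Ioi 0) := hint_T.const_mul _
    exact IntegrableOn.congr_fun hc (fun T hT => (hpt T hT).symm) hmeas
  refine ⟨hint1, hint_h2, ?_⟩
  -- the integral computation
  rw [setIntegral_congr_fun hmeas hpt, integral_const_mul, ← hcov]
  -- ∫ Ioo h = b^{s+1}/(1-b)^2 - s * I1
  have hI : ∫ x in Set.Ioo (0:ℝ) β, h x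
      = β ^ (s+1) / (1-β)^2 - s * ∫ x in Set.Ioo (0:ℝ) β, x ^ s / (1 - x) ^ 2 := by
    have hftc := ftc s β hs hb0 hb1
    rw [intervalIntegral.integral_of_le hb0.le, integral_Ioc_eq_integral_Ioo,
      integral_add hint_h (hint_h2.const_mul s), integral_const_mul] at hftc
    linarith
  rw [hI]
  -- final algebra
  have hkey : α^2 - S^2 = 4*S^2*β/(1-β)^2 := by
    rw [eq_div_iff (pow_ne_zero 2 h1b.ne')]
    rw [hβ]
    field_simp
    ring
  have hrpow1 : β ^ (s+1) = β ^ s * β := Real.rpow_add_one hb0.ne' s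
  have hrpowneg : β ^ (-s) = (β ^ s)⁻¹ := Real.rpow_neg hb0.le s
  rw [hrpow1, hrpowneg, hkey, hws]
  field_simp
  ring
end

section
/- For every T > 0 one has ẑ(T) > α + 1/2, the radicand (ẑ(T) + α − 1/2)² − 2g/α is positive, ẑ is differentiable at T, and ẑ'(T) = ẑ(T) − ẑ(T)² − 2·W(ẑ(T)). That is, ẑ solves the characteristic ordinary differential equation z' = z − z² − 2W(z). -/
open Real MeasureTheory Filter

/-- The disk function `W(z)` of random cubic maps (with `g = α/4 − α³`). -/
noncomputable def Wdisk (α : ℝ) (z : ℝ) : ℝ :=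
  (1 / 2) * (z - z ^ 2 + (z - α - 1 / 2)
    * Real.sqrt ((z + α - 1 / 2) ^ 2 - 2 * (α / 4 - α ^ 3) / α))

/-- The characteristic curve `ẑ(T) = α + 1/2 + Σ²/(sinh(ΣT)·C(T))`. -/
noncomputable def zhat (α : ℝ) (T : ℝ) : ℝ :=
  α + 1 / 2 + Sg α ^ 2 / (Real.sinh (Sg α * T) * Cg α T)

/-- For `T > 0`: `ẑ(T) > α + 1/2`, the radicand is positive, `ẑ` is differentiable at `T`,
and `ẑ'(T) = ẑ(T) − ẑ(T)² − 2W(ẑ(T))`. -/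
theorem stmt14 (α : ℝ) (h1 : 1 / (2 * Real.sqrt 3) < α) (h2 : α < 1 / 2) :
    ∀ T : ℝ, 0 < T →
      α + 1 / 2 < zhat α T ∧
      0 < (zhat α T + α - 1 / 2) ^ 2 - 2 * (α / 4 - α ^ 3) / α ∧
      DifferentiableAt ℝ (zhat α) T ∧
      deriv (zhat α) T = zhat α T - zhat α T ^ 2 - 2 * Wdisk α (zhat α T) := by
  have h3 : (0:ℝ) < Real.sqrt 3 := Real.sqrt_pos.mpr (by norm_num)
  have hα0 : 0 < α := lt_trans (by positivity) h1
  have h12 : (1 / (2 * Real.sqrt 3)) ^ 2 = 1 / 12 := by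
    rw [div_pow, mul_pow, Real.sq_sqrt (by norm_num : (3:ℝ) ≥ 0)]
    norm_num
  have hα2 : 1 / 12 < α ^ 2 := by
    rw [← h12]
    exact pow_lt_pow_left₀ h1 (by positivity) (by norm_num)
  have hS2 : (0:ℝ) < 3 * α ^ 2 / 2 - 1 / 8 := by nlinarith
  have hSp : 0 < Sg α := Real.sqrt_pos.mpr hS2
  have hSsq : Sg α ^ 2 = 3 * α ^ 2 / 2 - 1 / 8 := Real.sq_sqrt hS2.le
  intro T hT
  set S := Sg α with hSdef
  set s := Real.sinh (S * T) with hsdef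
  set c := Real.cosh (S * T) with hcdef
  have hs : 0 < s := Real.sinh_pos_iff.mpr (by positivity)
  have hc : 0 < c := Real.cosh_pos (S * T)
  have hc2 : c ^ 2 = s ^ 2 + 1 := Real.cosh_sq (S * T)
  have hC : 0 < Cg α T := by
    have : Cg α T = S * c + α * s := rfl
    rw [this]
    positivity
  have hD : 0 < s * Cg α T := mul_pos hs hC
  set u := S ^ 2 / (s * Cg α T) with hudef
  have hu : 0 < u := div_pos (pow_pos hSp 2) hD
  have hz : zhat α T = α + 1 / 2 + u := rfl
  have hzx : zhat α T + α - 1 / 2 = 2 * α + u := by rw [hz]; ring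
  -- Part 2 : the radicand
  have h2g : 2 * (α / 4 - α ^ 3) / α = 1 / 2 - 2 * α ^ 2 := by
    field_simp
    ring
  have hrad : (zhat α T + α - 1 / 2) ^ 2 - 2 * (α / 4 - α ^ 3) / α
      = u ^ 2 + 4 * α * u + 4 * S ^ 2 := by
    rw [hzx, h2g, hSsq]
    ring
  have hradpos : 0 < u ^ 2 + 4 * α * u + 4 * S ^ 2 := by positivity
  -- Derivative computations
  have hlin : HasDerivAt (fun t : ℝ => S * t) S T := by
    simpa using (hasDerivAt_id T).const_mul S
  have hsinh : HasDerivAt (fun t : ℝ => Real.sinh (S * t)) (c * S) T := hlin.sinh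
  have hcosh : HasDerivAt (fun t : ℝ => Real.cosh (S * t)) (s * S) T := hlin.cosh
  have hCg : HasDerivAt (Cg α) (S * (s * S) + α * (c * S)) T := by
    have : Cg α = fun t : ℝ => S * Real.cosh (S * t) + α * Real.sinh (S * t) := rfl
    rw [this]
    exact (hcosh.const_mul S).add (hsinh.const_mul α)
  set D' := S * (S * (c ^ 2 + s ^ 2) + 2 * α * s * c) with hD'def
  have hDD : HasDerivAt (fun t : ℝ => Real.sinh (S * t) * Cg α t) D' T := by
    have h := hsinh.mul hCg
    have : Cg α T = S * c + α * s := rfl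
    exact h.congr_deriv (by rw [this, hD'def]; ring)
  have hD'pos : 0 < D' := by positivity
  have hDne : s * Cg α T ≠ 0 := hD.ne'
  have hzh : HasDerivAt (zhat α) (-(S ^ 2 * D') / (s * Cg α T) ^ 2) T := by
    have hdiv := (hasDerivAt_const T (S ^ 2)).div hDD hDne
    have h := (hasDerivAt_const T (α + 1 / 2)).add hdiv
    have hfun : zhat α = fun t : ℝ =>
        (α + 1 / 2) + S ^ 2 / (Real.sinh (S * t) * Cg α t) := rfl
    rw [hfun]
    exact h.congr_deriv (by ring)
  -- Key algebraic identity
  have hkey : D' ^ 2 = S ^ 4 + 4 * α * S ^ 2 * (s * Cg α T)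
      + 4 * S ^ 2 * (s * Cg α T) ^ 2 := by
    have hCgv : Cg α T = S * c + α * s := rfl
    rw [hCgv, hD'def]
    linear_combination (S ^ 2 * (S ^ 2 * (c ^ 2 - s ^ 2 + 1)
      + 4 * α * S * s * c + 4 * α ^ 2 * s ^ 2)) * hc2
  have hsqrt : Real.sqrt (u ^ 2 + 4 * α * u + 4 * S ^ 2) = D' / (s * Cg α T) := by
    have hval : u ^ 2 + 4 * α * u + 4 * S ^ 2 = (D' / (s * Cg α T)) ^ 2 := by
      rw [hudef, div_pow, div_pow, hkey]
      field_simp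
    rw [hval, Real.sqrt_sq (by positivity)]
  refine ⟨by rw [hz]; linarith, by rw [hrad]; exact hradpos, hzh.differentiableAt, ?_⟩
  rw [hzh.deriv]
  unfold Wdisk
  rw [hrad, hsqrt, hz, hudef]
  field_simp
  ring
end

section
/- As z → +∞, z·W(z) converges to g; that is, the disk function W(z) falls off like g/z at infinity. -/
open Real MeasureTheory Filter

set_option maxHeartbeats 1000000 in
/-- `z·W(z) → g = α/4 − α³` as `z → +∞`. -/
theorem stmt17 (α : ℝ) (h1 : 1 / (2 * Real.sqrt 3) < α) (h2 : α < 1 / 2) :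
    Filter.Tendsto (fun z => z * Wdisk α z) Filter.atTop (nhds (α / 4 - α ^ 3)) := by
  have hs3 : (0:ℝ) < Real.sqrt 3 := Real.sqrt_pos.mpr (by norm_num)
  have hα0 : 0 < α := lt_trans (by positivity) h1
  have hα2 : 1 / 12 < α ^ 2 := by
    have hneg : -α < 1 / (2 * Real.sqrt 3) := by
      have : (0:ℝ) < 1 / (2 * Real.sqrt 3) := by positivity
      linarith
    have := sq_lt_sq' hneg h1
    have h3 : Real.sqrt 3 ^ 2 = 3 := Real.sq_sqrt (by norm_num)
    calc (1:ℝ)/12 = (1 / (2 * Real.sqrt 3))^2 := by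
          field_simp; nlinarith [h3]
      _ < α ^ 2 := this
  set a : ℝ := α - 1/2 with ha
  set c : ℝ := 1/2 - 2*α^2 with hc
  set r : ℝ → ℝ := fun t => Real.sqrt ((1+a*t)^2 - c*t^2) with hr
  set G : ℝ → ℝ := fun t => (c/4) * ( (a*(2+a*t) - c*t) / ((r t + 1)*(r t + 1 + a*t))
      + (3*α+1/2) / (r t + 1 + a*t) ) with hG
  have hr0 : r 0 = 1 := by simp [hr]
  have hG0 : G 0 = α / 4 - α ^ 3 := by
    simp only [hG, hr0]
    norm_num
    ring
  have hrc : ContinuousAt r 0 := by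
    apply Real.continuous_sqrt.continuousAt.comp
    fun_prop
  have hGc : ContinuousAt G 0 := by
    have h1' : ((r 0 + 1)*(r 0 + 1 + a*0)) ≠ 0 := by rw [hr0]; norm_num
    have h2' : (r 0 + 1 + a*0) ≠ 0 := by rw [hr0]; norm_num
    apply ContinuousAt.mul continuousAt_const
    apply ContinuousAt.add
    · exact ContinuousAt.div (by fun_prop) (by fun_prop (disch := skip)) h1'
    · exact ContinuousAt.div continuousAt_const (by fun_prop (disch := skip)) h2'
  have hlim : Tendsto (fun z : ℝ => G (1/z)) atTop (nhds (α / 4 - α ^ 3)) := by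
    rw [← hG0]
    exact hGc.tendsto.comp (tendsto_inv_atTop_zero.congr fun x => (one_div x).symm)
  refine Tendsto.congr' ?_ hlim
  filter_upwards [eventually_ge_atTop (1:ℝ)] with z hz
  have hz0 : 0 < z := lt_of_lt_of_le one_pos hz
  have hrad : 0 ≤ (z + α - 1/2)^2 - c := by nlinarith
  set s : ℝ := Real.sqrt ((z + α - 1/2)^2 - c) with hsdef
  have hs0 : 0 ≤ s := Real.sqrt_nonneg _
  have hs2 : s^2 = (z + α - 1/2)^2 - c := Real.sq_sqrt hrad
  have hceq : 2 * (α / 4 - α ^ 3) / α = c := by field_simp [hc]; ring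
  have hrz : r (1/z) = s / z := by
    have heq : (1+a*(1/z))^2 - c*(1/z)^2 = ((z + α - 1/2)^2 - c) / z^2 := by
      field_simp [ha]; ring
    rw [hr]; simp only
    rw [heq, Real.sqrt_div hrad, Real.sqrt_sq hz0.le, hsdef]
  have hne1 : s + z ≠ 0 := by positivity
  have hpos2 : 0 < s + z + a := by
    have : (0:ℝ) < z + a := by rw [ha]; linarith
    linarith
  have hne2 : s + z + a ≠ 0 := ne_of_gt hpos2
  have key1 : z * Wdisk α z * ((s+z)*(s+z+a))
      = (c/4)*( z*(2*a*z+a^2-c) + (3*α+1/2)*(z*(s+z)) ) := by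
    rw [Wdisk, hceq, ← hsdef]
    rw [ha, hc]
    linear_combination ((1:ℝ)/8*z - 1/2*z*α^2 - 1/4*z^2 - 1/2*z^2*α + 1/2*z^3
      - 1/4*s*z - 1/2*s*z*α + 1/2*s*z^2) * hs2
  have hden : (s+z)*(s+z+a) ≠ 0 := mul_ne_zero hne1 hne2
  have key2 : z * Wdisk α z
      = (c/4)*( z*(2*a*z+a^2-c) + (3*α+1/2)*(z*(s+z)) ) / ((s+z)*(s+z+a)) := by
    rw [eq_div_iff hden]; exact key1
  rw [key2, hG]; simp only [hrz]
  have hd1 : s / z + 1 ≠ 0 := by positivity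
  have hd2 : s / z + 1 + a * (1/z) ≠ 0 := by
    have : s / z + 1 + a * (1/z) = (s + z + a) / z := by field_simp
    rw [this]
    positivity
  field_simp
end

section
/- Let B : ℝ → ℝ be continuous and define A(T) = ∫₀^T (T − u)·e^{−(T−u)}·B(u) du for T ≥ 0. Then A is twice differentiable on (0,∞) and A''(T) + 2·A'(T) + A(T) = B(T) for every T > 0. (This inverts the double exponential convolution: if A is the convolution of B with the density s·e^{−s} of the sum of two independent unit-rate exponential variables, then B = (1 + d/dT)² A.) -/
open Real

/-- If `A(T) = ∫₀^T (T − u)e^{−(T−u)} B(u) du` with `B` continuous, then `A` is twice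
differentiable on `(0,∞)` and `A'' + 2A' + A = B` there. -/
theorem stmt18 (B : ℝ → ℝ) (hB : Continuous B) (A : ℝ → ℝ)
    (hA : A = fun T => ∫ u in (0 : ℝ)..T, (T - u) * Real.exp (-(T - u)) * B u) :
    (∀ T : ℝ, 0 < T → DifferentiableAt ℝ A T) ∧
    (∀ T : ℝ, 0 < T → DifferentiableAt ℝ (deriv A) T) ∧
    ∀ T : ℝ, 0 < T → deriv (deriv A) T + 2 * deriv A T + A T = B T := by
  set F : ℝ → ℝ := fun T => ∫ u in (0 : ℝ)..T, Real.exp u * B u with hFdef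
  set G : ℝ → ℝ := fun T => ∫ u in (0 : ℝ)..T, u * Real.exp u * B u with hGdef
  have hFc : Continuous fun u : ℝ => Real.exp u * B u := by continuity
  have hGc : Continuous fun u : ℝ => u * Real.exp u * B u := by continuity
  have hF : ∀ T : ℝ, HasDerivAt F (Real.exp T * B T) T := fun T =>
    (hFc.integral_hasStrictDerivAt 0 T).hasDerivAt
  have hG : ∀ T : ℝ, HasDerivAt G (T * Real.exp T * B T) T := fun T =>
    (hGc.integral_hasStrictDerivAt 0 T).hasDerivAt
  have hAeq : A = fun T => T * Real.exp (-T) * F T - Real.exp (-T) * G T := by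
    rw [hA]; funext T
    rw [hFdef, hGdef, ← intervalIntegral.integral_const_mul,
      ← intervalIntegral.integral_const_mul,
      ← intervalIntegral.integral_sub
        ((show Continuous fun u : ℝ => T * Real.exp (-T) * (Real.exp u * B u) from continuous_const.mul hFc).intervalIntegrable 0 T)
        ((show Continuous fun u : ℝ => Real.exp (-T) * (u * Real.exp u * B u) from continuous_const.mul hGc).intervalIntegrable 0 T)]
    apply intervalIntegral.integral_congr
    intro u _
    have : Real.exp (-(T - u)) = Real.exp (-T) * Real.exp u := by
      rw [← Real.exp_add]; ring_nf
    show (T - u) * Real.exp (-(T - u)) * B u = _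
    rw [this]; ring
  have hexp : ∀ T : ℝ, HasDerivAt (fun x : ℝ => Real.exp (-x)) (-Real.exp (-T)) T := by
    intro T
    simpa using ((hasDerivAt_id T).neg.exp)
  have hA' : ∀ T : ℝ, HasDerivAt A ((1 - T) * Real.exp (-T) * F T + Real.exp (-T) * G T) T := by
    intro T
    rw [hAeq]
    have h1 : HasDerivAt (fun x : ℝ => x * Real.exp (-x) * F x)
        ((1 * Real.exp (-T) + T * -Real.exp (-T)) * F T
          + T * Real.exp (-T) * (Real.exp T * B T)) T :=
      ((hasDerivAt_id T).mul (hexp T)).mul (hF T)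
    have h2 : HasDerivAt (fun x : ℝ => Real.exp (-x) * G x)
        (-Real.exp (-T) * G T + Real.exp (-T) * (T * Real.exp T * B T)) T :=
      (hexp T).mul (hG T)
    have := h1.sub h2
    refine this.congr_deriv (Eq.symm ?_)
    ring
  have hDA : deriv A = fun T => (1 - T) * Real.exp (-T) * F T + Real.exp (-T) * G T := by
    funext T; exact (hA' T).deriv
  have hA'' : ∀ T : ℝ, HasDerivAt (deriv A)
      ((T - 2) * Real.exp (-T) * F T - Real.exp (-T) * G T + B T) T := by
    intro T
    rw [hDA]
    have h1 : HasDerivAt (fun x : ℝ => (1 - x) * Real.exp (-x) * F x)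
        (((0 - 1) * Real.exp (-T) + (1 - T) * -Real.exp (-T)) * F T
          + (1 - T) * Real.exp (-T) * (Real.exp T * B T)) T :=
      (((hasDerivAt_const T (1:ℝ)).sub (hasDerivAt_id T)).mul (hexp T)).mul (hF T)
    have h2 : HasDerivAt (fun x : ℝ => Real.exp (-x) * G x)
        (-Real.exp (-T) * G T + Real.exp (-T) * (T * Real.exp T * B T)) T :=
      (hexp T).mul (hG T)
    have := h1.add h2
    refine this.congr_deriv (Eq.symm ?_)
    have he : Real.exp (-T) * Real.exp T = 1 := by
      rw [← Real.exp_add]; simp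
    linear_combination (-(B T)) * he
  refine ⟨fun T _ => (hA' T).differentiableAt, fun T _ => (hA'' T).differentiableAt, ?_⟩
  intro T _
  rw [(hA'' T).deriv, hDA, hAeq]
  ring
end

section
/- For ε ∈ (0, 1/√24) define g(ε) = (1 − 24ε²)/(12√3), let α(ε) be the largest real root of the cubic x³ − x/4 + g(ε) = 0 (which satisfies 1/(2√3) < α(ε) < 1/2), set Σ(ε) = √(3α(ε)²/2 − 1/8), and C_ε(T) = Σ(ε)·cosh(Σ(ε)T) + α(ε)·sinh(Σ(ε)T). Then for every fixed T₀ > 0, lim_{ε→0⁺} ε^{−3/2} · (log C_ε)'''(T₀·ε^{−1/2}) = 2·cosh(T₀)/sinh³(T₀). (This is the scaling limit of the two-point function of weighted cubic maps, which coincides with the two-point function of the Brownian map.) -/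
open Real Filter

private lemma hasDerivAt_CC (A B s T : ℝ) :
    HasDerivAt (fun T => A * Real.cosh (s*T) + B * Real.sinh (s*T))
      (A*s*Real.sinh (s*T) + B*s*Real.cosh (s*T)) T := by
  have hs : HasDerivAt (fun T : ℝ => s*T) s T := by simpa using (hasDerivAt_id T).const_mul s
  have h1 := ((Real.hasDerivAt_cosh (s*T)).comp T hs).const_mul A
  have h2 := ((Real.hasDerivAt_sinh (s*T)).comp T hs).const_mul B
  exact (h1.add h2).congr_deriv (by ring)

private lemma third_deriv_log (s a t : ℝ) (hs : 0 < s) (ha : 0 < a) (ht : 0 < t) :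
    iteratedDeriv 3 (fun T => Real.log (s * Real.cosh (s*T) + a * Real.sinh (s*T))) t
      = 2*s^3*(a^2 - s^2)*(s*Real.sinh (s*t)+a*Real.cosh (s*t))
          / (s*Real.cosh (s*t)+a*Real.sinh (s*t))^3 := by
  set Cf : ℝ → ℝ := fun T => s * Real.cosh (s*T) + a * Real.sinh (s*T) with hCf
  set Cp : ℝ → ℝ := fun T => s*s*Real.sinh (s*T) + a*s*Real.cosh (s*T) with hCp
  have hCfd : ∀ T, HasDerivAt Cf (Cp T) T := fun T => hasDerivAt_CC s a s T
  have hCpos : ∀ T ∈ Set.Ioi (0:ℝ), 0 < Cf T := by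
    intro T hT
    have h1 : 0 < Real.cosh (s*T) := Real.cosh_pos _
    have h2 : 0 ≤ Real.sinh (s*T) := by
      rw [← Real.sinh_zero]
      exact Real.sinh_le_sinh.mpr (mul_nonneg hs.le (le_of_lt (Set.mem_Ioi.mp hT)))
    have := mul_pos hs h1
    have := mul_nonneg ha.le h2
    simp only [hCf]
    linarith
  set g1 : ℝ → ℝ := fun T => Cp T / Cf T with hg1
  have hfd : ∀ T ∈ Set.Ioi (0:ℝ),
      HasDerivAt (fun T => Real.log (Cf T)) (g1 T) T := by
    intro T hT
    exact (hCfd T).log (hCpos T hT).ne'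
  have hopen : IsOpen (Set.Ioi (0:ℝ)) := isOpen_Ioi
  have h1 : ∀ T ∈ Set.Ioi (0:ℝ), deriv (fun T => Real.log (Cf T)) T = g1 T :=
    fun T hT => (hfd T hT).deriv
  have hg1d : ∀ T ∈ Set.Ioi (0:ℝ), HasDerivAt g1 (s^2*(s^2-a^2)/(Cf T)^2) T := by
    intro T hT
    have hCpd : HasDerivAt Cp (s*s*s*Real.cosh (s*T) + a*s*s*Real.sinh (s*T)) T := by
      have := hasDerivAt_CC (a*s) (s*s) s T
      convert this using 1 <;> [funext x; skip] <;> ring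
    have hne := (hCpos T hT).ne'
    have := hCpd.div (hCfd T) hne
    refine this.congr_deriv ?_
    have hch := Real.cosh_sq_sub_sinh_sq (s*T)
    have hnum : s^2*(s^2-a^2)
        = (s*s*s*Real.cosh (s*T) + a*s*s*Real.sinh (s*T)) * Cf T - Cp T * Cp T := by
      simp only [hCf, hCp]
      linear_combination (a^2*s^2 - s^4) * hch
    rw [hnum]
  have h2 : ∀ T ∈ Set.Ioi (0:ℝ),
      deriv (deriv (fun T => Real.log (Cf T))) T = s^2*(s^2-a^2)/(Cf T)^2 := by
    intro T hT
    have he : deriv (fun T => Real.log (Cf T)) =ᶠ[nhds T] g1 :=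
      Filter.eventuallyEq_of_mem (hopen.mem_nhds hT) h1
    rw [he.deriv_eq]
    exact (hg1d T hT).deriv
  have hsq : HasDerivAt (fun T => (Cf T)^2) (2*Cf t*Cp t) t := by
    have := (hCfd t).pow 2
    exact this.congr_deriv (by ring)
  have hg2d : HasDerivAt (fun T => s^2*(s^2-a^2)/(Cf T)^2)
      ((0*(Cf t)^2 - s^2*(s^2-a^2)*(2*Cf t*Cp t))/((Cf t)^2)^2) t :=
    (hasDerivAt_const t (s^2*(s^2-a^2))).div hsq (pow_ne_zero 2 (hCpos t ht).ne')
  have h3 : iteratedDeriv 3 (fun T => Real.log (Cf T)) t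
      = (0*(Cf t)^2 - s^2*(s^2-a^2)*(2*Cf t*Cp t))/((Cf t)^2)^2 := by
    rw [show (3:ℕ) = 2 + 1 from rfl, iteratedDeriv_succ, iteratedDeriv_succ, iteratedDeriv_one]
    have he : deriv (deriv (fun T => Real.log (Cf T)))
        =ᶠ[nhds t] (fun T => s^2*(s^2-a^2)/(Cf T)^2) :=
      Filter.eventuallyEq_of_mem (hopen.mem_nhds ht) h2
    rw [he.deriv_eq]
    exact hg2d.deriv
  rw [h3]
  have hne := (hCpos t ht).ne'
  field_simp [hCf, hCp]
  ring

set_option maxHeartbeats 1000000 in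
/-- Scaling limit of the two-point function of weighted cubic maps. With
`g(ε) = (1 − 24ε²)/(12√3)`, `α(ε)` the largest real root of `x³ − x/4 + g(ε) = 0`
(which lies in `(1/(2√3), 1/2)`), `Σ(ε) = √(3α(ε)²/2 − 1/8)` and
`C_ε(T) = Σ(ε)cosh(Σ(ε)T) + α(ε)sinh(Σ(ε)T)`, one has, for every fixed `T₀ > 0`,
`ε^{−3/2}·(log C_ε)'''(T₀ ε^{−1/2}) → 2cosh(T₀)/sinh³(T₀)` as `ε → 0⁺`. -/
theorem stmt19 (g : ℝ → ℝ) (hg : ∀ ε : ℝ, g ε = (1 - 24 * ε ^ 2) / (12 * Real.sqrt 3))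
    (α : ℝ → ℝ)
    (hroot : ∀ ε : ℝ, ε ∈ Set.Ioo 0 (1 / Real.sqrt 24) →
      (α ε) ^ 3 - α ε / 4 + g ε = 0)
    (hbounds : ∀ ε : ℝ, ε ∈ Set.Ioo 0 (1 / Real.sqrt 24) →
      1 / (2 * Real.sqrt 3) < α ε ∧ α ε < 1 / 2)
    (hmax : ∀ ε : ℝ, ε ∈ Set.Ioo 0 (1 / Real.sqrt 24) →
      ∀ x : ℝ, x ^ 3 - x / 4 + g ε = 0 → x ≤ α ε)
    (Sig : ℝ → ℝ) (hSig : ∀ ε : ℝ, Sig ε = Real.sqrt (3 * (α ε) ^ 2 / 2 - 1 / 8))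
    (C : ℝ → ℝ → ℝ)
    (hC : ∀ ε T : ℝ, C ε T = Sig ε * Real.cosh (Sig ε * T) + α ε * Real.sinh (Sig ε * T)) :
    ∀ T₀ : ℝ, 0 < T₀ →
      Tendsto (fun ε : ℝ =>
          ε ^ (-(3 : ℝ) / 2)
            * iteratedDeriv 3 (fun T => Real.log (C ε T)) (T₀ * ε ^ (-(1 : ℝ) / 2)))
        (nhdsWithin 0 (Set.Ioi 0))
        (nhds (2 * Real.cosh T₀ / Real.sinh T₀ ^ 3)) := by
  intro T₀ hT₀
  have hr3p : 0 < Real.sqrt 3 := Real.sqrt_pos.mpr (by norm_num)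
  set r3 : ℝ := Real.sqrt 3 with hr3def
  have hr3 : r3 ^ 2 = 3 := Real.sq_sqrt (by norm_num)
  have hr3ne : r3 ≠ 0 := hr3p.ne'
  have hshT : 0 < Real.sinh T₀ := Real.sinh_pos_iff.mpr hT₀
  have hS24 : 0 < 1 / Real.sqrt 24 := by positivity
  have hSmem : Set.Ioo (0:ℝ) (1 / Real.sqrt 24) ∈ nhdsWithin (0:ℝ) (Set.Ioi 0) :=
    Ioo_mem_nhdsGT_of_mem ⟨le_refl 0, hS24⟩
  set S : Set ℝ := Set.Ioo 0 (1 / Real.sqrt 24) with hSdef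
  -- basic facts
  have h16 : (1:ℝ)/(2*r3) = r3/6 := by
    rw [div_eq_div_iff (by positivity) (by norm_num)]
    linear_combination (-2)*hr3
  have hlow : ∀ ε ∈ S, r3/6 < α ε := by
    intro ε hε
    have h := (hbounds ε hε).1
    rw [h16] at h
    exact h
  have hαpos : ∀ ε ∈ S, 0 < α ε := by
    intro ε hε
    have := hlow ε hε
    have : (0:ℝ) < r3/6 := by positivity
    linarith [hlow ε hε]
  -- key identity
  have hkey : ∀ ε ∈ S, (α ε - r3/6)^2 * (α ε + r3/3) = 2*ε^2*r3/3 := by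
    intro ε hε
    have h := hroot ε hε
    rw [hg] at h
    field_simp at h
    linear_combination (r3/144)*h + ((r3 - 36*(α ε)^3)/108)*hr3
  -- upper bound on α
  have hupper : ∀ ε ∈ S, α ε ≤ r3/6 + 2*ε := by
    intro ε hε
    have hk := hkey ε hε
    have hd : 0 < α ε - r3/6 := sub_pos.mpr (hlow ε hε)
    have hs' : r3/2 ≤ α ε + r3/3 := by linarith [hlow ε hε]
    have hε0 : 0 < ε := hε.1
    have h1 : (α ε - r3/6)^2 * (r3/2) ≤ 2*ε^2*r3/3 := by
      calc (α ε - r3/6)^2 * (r3/2) ≤ (α ε - r3/6)^2 * (α ε + r3/3) :=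
            mul_le_mul_of_nonneg_left hs' (sq_nonneg _)
        _ = 2*ε^2*r3/3 := hk
    have h2 : (α ε - r3/6)^2 ≤ 4*ε^2/3 := by
      have h2' : (α ε - r3/6)^2 ≤ (2*ε^2*r3/3)/(r3/2) := (le_div_iff₀ (by positivity)).mpr h1
      have : (2*ε^2*r3/3)/(r3/2) = 4*ε^2/3 := by field_simp; ring
      linarith [this ▸ h2']
    nlinarith [h2, hd, hε0]
  -- limit of α
  have hαt : Tendsto α (nhdsWithin (0:ℝ) (Set.Ioi 0)) (nhds (r3/6)) := by
    apply tendsto_of_tendsto_of_tendsto_of_le_of_le' (g := fun _ : ℝ => r3/6)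
      (h := fun ε : ℝ => r3/6 + 2*ε)
    · exact tendsto_const_nhds
    · have hcont : Continuous (fun ε : ℝ => r3/6 + 2*ε) := by continuity
      have hc : Tendsto (fun ε : ℝ => r3/6 + 2*ε) (nhds 0) (nhds (r3/6)) := by
        simpa using hcont.tendsto 0
      exact hc.mono_left nhdsWithin_le_nhds
    · filter_upwards [hSmem] with ε hε
      exact (hlow ε hε).le
    · filter_upwards [hSmem] with ε hε
      exact hupper ε hε
  -- inner factorization
  have hin : ∀ x : ℝ, 3*x^2/2 - 1/8 = (3/2)*(x - r3/6)*(x + r3/6) := by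
    intro x
    linear_combination (1/24)*hr3
  have hinpos : ∀ ε ∈ S, 0 < 3*(α ε)^2/2 - 1/8 := by
    intro ε hε
    rw [hin]
    have hd : 0 < α ε - r3/6 := sub_pos.mpr (hlow ε hε)
    have hd2 : 0 < α ε + r3/6 := by
      have : (0:ℝ) < r3/6 := by positivity
      linarith [hαpos ε hε]
    positivity
  have hSigpos : ∀ ε ∈ S, 0 < Sig ε := by
    intro ε hε
    rw [hSig]
    exact Real.sqrt_pos.mpr (hinpos ε hε)
  have hSigsq : ∀ ε ∈ S, (Sig ε)^2 = 3*(α ε)^2/2 - 1/8 := by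
    intro ε hε
    rw [hSig]
    exact Real.sq_sqrt (hinpos ε hε).le
  -- limit of Sig
  have hSigt : Tendsto Sig (nhdsWithin (0:ℝ) (Set.Ioi 0)) (nhds 0) := by
    have hfun : Sig = (fun x => Real.sqrt (3*x^2/2 - 1/8)) ∘ α := funext fun ε => hSig ε
    have hc : ContinuousAt (fun x : ℝ => Real.sqrt (3*x^2/2 - 1/8)) (r3/6) :=
      Real.continuous_sqrt.continuousAt.comp (by fun_prop)
    have h0 : Real.sqrt (3*(r3/6)^2/2 - 1/8) = 0 := by
      rw [show 3*(r3/6)^2/2 - 1/8 = (0:ℝ) by linear_combination (1/24)*hr3]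
      exact Real.sqrt_zero
    have hcomp := hc.tendsto.comp hαt
    simp only [Function.comp, h0] at hcomp
    rw [hfun]
    exact hcomp
  -- the rescaled quantity P
  set P : ℝ → ℝ := fun ε => Sig ε * ε ^ (-(1:ℝ)/2) with hPdef
  have hrpow : ∀ ε : ℝ, 0 < ε → ε ^ (-(1:ℝ)/2) = (Real.sqrt ε)⁻¹ := by
    intro ε hε0
    rw [show (-(1:ℝ)/2) = -(1/2) by norm_num, Real.rpow_neg hε0.le, Real.sqrt_eq_rpow]
  have hpeq : ∀ ε ∈ S, P ε
      = Real.sqrt ((3/2)*Real.sqrt (2*r3/(3*(α ε+r3/3)))*(α ε + r3/6)) := by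
    intro ε hε
    have hε0 : 0 < ε := hε.1
    have hd : 0 < α ε - r3/6 := sub_pos.mpr (hlow ε hε)
    have hsum : 0 < α ε + r3/3 := by
      have : (0:ℝ) < r3/3 := by positivity
      linarith [hαpos ε hε]
    have hq : (α ε - r3/6)/ε = Real.sqrt (2*r3/(3*(α ε+r3/3))) := by
      rw [← Real.sqrt_sq (le_of_lt (div_pos hd hε0))]
      congr 1
      have hk := hkey ε hε
      have h3s : α ε * 3 + r3 ≠ 0 := by nlinarith [hsum]
      field_simp [hε0.ne', h3s]
      linear_combination 108*hk
    calc P ε = Real.sqrt ((Sig ε)^2) * Real.sqrt ε⁻¹ := by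
          rw [Real.sqrt_sq (hSigpos ε hε).le, Real.sqrt_inv, hPdef, ← hrpow ε hε0]
      _ = Real.sqrt ((Sig ε)^2 * ε⁻¹) := (Real.sqrt_mul (sq_nonneg _) _).symm
      _ = Real.sqrt ((3/2)*Real.sqrt (2*r3/(3*(α ε+r3/3)))*(α ε + r3/6)) := by
          congr 1
          rw [← hq, hSigsq ε hε, hin (α ε)]
          ring
  -- limit of P
  have hPt : Tendsto P (nhdsWithin (0:ℝ) (Set.Ioi 0)) (nhds 1) := by
    set F : ℝ → ℝ := fun x => Real.sqrt ((3/2)*Real.sqrt (2*r3/(3*(x+r3/3)))*(x + r3/6))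
      with hFdef
    have hden : (3:ℝ)*(r3/6+r3/3) ≠ 0 := by
      have : (0:ℝ) < r3/6 + r3/3 := by positivity
      positivity
    have hFc : ContinuousAt F (r3/6) := by
      apply Real.continuous_sqrt.continuousAt.comp
      apply ContinuousAt.mul
      · apply ContinuousAt.mul continuousAt_const
        exact Real.continuous_sqrt.continuousAt.comp
          (ContinuousAt.div continuousAt_const (by fun_prop) hden)
      · fun_prop
    have hF1 : F (r3/6) = 1 := by
      have e1 : 2*r3/(3*(r3/6+r3/3)) = 4/3 := by
        field_simp
        ring
      have e2 : Real.sqrt ((4:ℝ)/3) = 2*r3/3 := by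
        rw [show (4:ℝ)/3 = (2*r3/3)^2 by linear_combination (-4/9)*hr3]
        exact Real.sqrt_sq (by positivity)
      simp only [hFdef]
      rw [e1, e2, show (3:ℝ)/2*(2*r3/3)*(r3/6+r3/6) = r3^2/3 by ring, hr3]
      norm_num
    have hcomp := hFc.tendsto.comp hαt
    rw [hF1] at hcomp
    apply Tendsto.congr' _ hcomp
    filter_upwards [hSmem] with ε hε
    exact (hpeq ε hε).symm
  -- assemble the limit of the explicit expression
  have hTp : Tendsto (fun ε => T₀ * P ε) (nhdsWithin (0:ℝ) (Set.Ioi 0)) (nhds T₀) := by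
    have := hPt.const_mul T₀
    simpa using this
  have hsinh : Tendsto (fun ε => Real.sinh (T₀ * P ε)) (nhdsWithin (0:ℝ) (Set.Ioi 0))
      (nhds (Real.sinh T₀)) := (Real.continuous_sinh.continuousAt.tendsto).comp hTp
  have hcosh : Tendsto (fun ε => Real.cosh (T₀ * P ε)) (nhdsWithin (0:ℝ) (Set.Ioi 0))
      (nhds (Real.cosh T₀)) := (Real.continuous_cosh.continuousAt.tendsto).comp hTp
  have hnum : Tendsto (fun ε => 2*(P ε)^3*((α ε)^2-(Sig ε)^2)
      *(Sig ε*Real.sinh (T₀*P ε)+α ε*Real.cosh (T₀*P ε)))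
      (nhdsWithin (0:ℝ) (Set.Ioi 0))
      (nhds (2*1^3*((r3/6)^2-0^2)*(0*Real.sinh T₀+(r3/6)*Real.cosh T₀))) :=
    ((tendsto_const_nhds.mul (hPt.pow 3)).mul ((hαt.pow 2).sub (hSigt.pow 2))).mul
      ((hSigt.mul hsinh).add (hαt.mul hcosh))
  have hden : Tendsto (fun ε => (Sig ε*Real.cosh (T₀*P ε)+α ε*Real.sinh (T₀*P ε))^3)
      (nhdsWithin (0:ℝ) (Set.Ioi 0))
      (nhds ((0*Real.cosh T₀+(r3/6)*Real.sinh T₀)^3)) :=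
    ((hSigt.mul hcosh).add (hαt.mul hsinh)).pow 3
  have hdne : ((0:ℝ)*Real.cosh T₀+(r3/6)*Real.sinh T₀)^3 ≠ 0 := by
    have h0 : (0:ℝ)*Real.cosh T₀+(r3/6)*Real.sinh T₀ = (r3/6)*Real.sinh T₀ := by ring
    rw [h0]
    exact pow_ne_zero 3 (ne_of_gt (mul_pos (by positivity) hshT))
  have hE := hnum.div hden hdne
  have hval : (2*1^3*((r3/6)^2-0^2)*(0*Real.sinh T₀+(r3/6)*Real.cosh T₀))
      / ((0*Real.cosh T₀+(r3/6)*Real.sinh T₀)^3) = 2*Real.cosh T₀/Real.sinh T₀^3 := by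
    rw [show (0*Real.cosh T₀+(r3/6)*Real.sinh T₀) = (r3/6)*Real.sinh T₀ by ring,
      show (2*1^3*((r3/6)^2-0^2)*(0*Real.sinh T₀+(r3/6)*Real.cosh T₀))
        = 2*(r3/6)^3*Real.cosh T₀ by ring, mul_pow]
    have h1 : ((r3/6):ℝ)^3 ≠ 0 := pow_ne_zero 3 (div_ne_zero hr3ne (by norm_num))
    have h2 : Real.sinh T₀ ^ 3 ≠ 0 := pow_ne_zero _ hshT.ne'
    field_simp
  rw [hval] at hE
  apply Tendsto.congr' _ hE
  filter_upwards [hSmem] with ε hε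
  simp only [Pi.div_apply]
  have hε0 : 0 < ε := hε.1
  have hSp := hSigpos ε hε
  have hαp := hαpos ε hε
  have htpos : 0 < T₀ * ε^(-(1:ℝ)/2) := mul_pos hT₀ (Real.rpow_pos_of_pos hε0 _)
  have hfn : (fun T => Real.log (C ε T))
      = (fun T => Real.log (Sig ε * Real.cosh (Sig ε*T) + α ε * Real.sinh (Sig ε*T))) := by
    funext T
    rw [hC]
  rw [hfn, third_deriv_log (Sig ε) (α ε) _ hSp hαp htpos]
  have hst : Sig ε * (T₀*ε^(-(1:ℝ)/2)) = T₀ * P ε := by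
    rw [hPdef]; ring
  have hp3 : ε^(-(3:ℝ)/2) = (ε^(-(1:ℝ)/2))^3 := by
    rw [← Real.rpow_natCast (ε^(-(1:ℝ)/2)) 3, ← Real.rpow_mul hε0.le]
    norm_num
  rw [hst, hp3]
  simp only [hPdef]
  ring
end
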